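/- arXiv:1402.1951 — 7 statements merged into one kernel-verified Lean document; each statement's English description precedes it below -/
import Mathlib

section
/- Let R be a Noetherian domain of finite type over a perfect field C of characteristic p > 0. Then the p-normalization R' of R (the set of elements of Frac(R) some p-power of which lies in R) is a C-algebra of finite type. -/
/-- Let `R` be a Noetherian domain of finite type over a perfect field `C` of
characteristic `p > 0`, with fraction field `K`.  Then the `p`-normalization
`R' = { α ∈ K : α^(p^m) ∈ R for some m }` of `R` is a `C`-algebra of finite type, i.e. it is
the `C`-subalgebra of `K` generated by finitely many elements. -/
theorem stmt7 (C R K : Type*) [Field C] [CommRing R] [IsDomain R] [Algebra C R]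
    (p : ℕ) [Fact p.Prime] [CharP C p] [PerfectRing C p]
    [Algebra.FiniteType C R] [IsNoetherianRing R]
    [Field K] [Algebra R K] [IsFractionRing R K] [Algebra C K] [IsScalarTower C R K] :
    ∃ s : Finset K,
      (Algebra.adjoin C (s : Set K) : Set K) =
        {α : K | ∃ m : ℕ, α ^ p ^ m ∈ (algebraMap R K).range} := by
  classical
  have hp : p.Prime := Fact.out
  haveI : CharP K p := charP_of_injective_algebraMap (algebraMap C K).injective p
  obtain ⟨s, hs⟩ := (inferInstance : Algebra.FiniteType C R).out
  -- Key step: a common denominator `c` for all `p`-th roots.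
  have key : ∃ c : R, c ≠ 0 ∧ ∀ α : K, α ^ p ∈ (algebraMap R K).range →
      algebraMap R K c * α ∈ (algebraMap R K).range := by
    set L := PerfectClosure K p with hL
    letI : Algebra K L := (PerfectClosure.of K p).toAlgebra
    letI : Algebra R L := ((algebraMap K L).comp (algebraMap R K)).toAlgebra
    haveI : IsScalarTower R K L := IsScalarTower.of_algebraMap_eq fun x => rfl
    set ψ := (frobeniusEquiv L p).symm with hψ
    set t : Finset L := s.image (fun x => ψ (algebraMap R L x)) with ht
    have hint : ∀ x ∈ (t : Set L), IsIntegral R x := by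
      intro x hx
      simp only [ht, Finset.coe_image, Set.mem_image, Finset.mem_coe] at hx
      obtain ⟨a, -, rfl⟩ := hx
      refine IsIntegral.of_pow hp.pos ?_
      rw [hψ, frobeniusEquiv_symm_pow_p]
      exact isIntegral_algebraMap
    set M : Submodule R L := Subalgebra.toSubmodule (Algebra.adjoin R (t : Set L)) with hMdef
    have hM : M.FG := fg_adjoin_of_finite t.finite_toSet hint
    haveI : IsNoetherian R M := isNoetherian_of_fg_of_noetherian _ hM
    set V : Submodule R L :=
      LinearMap.range ((IsScalarTower.toAlgHom R K L).toLinearMap) with hV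
    have hM' : (M ⊓ V).FG := by
      have h4 : Submodule.map M.subtype (Submodule.comap M.subtype (M ⊓ V)) = M ⊓ V := by
        rw [Submodule.map_comap_subtype]
        exact inf_of_le_right inf_le_left
      exact h4 ▸ (IsNoetherian.noetherian _).map _
    obtain ⟨Y, hY⟩ := hM'
    have hYV : ∀ y ∈ Y, ∃ k : K, algebraMap K L k = y := by
      intro y hy
      have hy' : y ∈ M ⊓ V := hY ▸ Submodule.subset_span hy
      obtain ⟨k, hk⟩ := hy'.2
      exact ⟨k, hk⟩
    choose! k hk using hYV
    obtain ⟨b, hb⟩ := IsLocalization.exist_integer_multiples (nonZeroDivisors R) Y k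
    refine ⟨(b : R), nonZeroDivisors.coe_ne_zero b, ?_⟩
    intro α hα
    obtain ⟨r, hr⟩ := hα
    have hrmem : r ∈ Algebra.adjoin C (s : Set R) := by
      rw [hs]; exact Algebra.mem_top
    have hstep : ∀ x ∈ Algebra.adjoin C (s : Set R),
        ψ (algebraMap R L x) ∈ Algebra.adjoin R (t : Set L) := by
      intro x0 hx0
      induction hx0 using Algebra.adjoin_induction with
      | mem z hz =>
        refine Algebra.subset_adjoin ?_
        simp only [ht, Finset.coe_image, Set.mem_image, Finset.mem_coe]
        exact ⟨z, hz, rfl⟩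
      | algebraMap c0 =>
        have h1 : ψ (algebraMap R L (algebraMap C R c0)) =
            algebraMap R L (algebraMap C R ((frobeniusEquiv C p).symm c0)) := by
          rw [hψ]
          apply (frobeniusEquiv L p).injective
          rw [RingEquiv.apply_symm_apply, frobeniusEquiv_def, ← map_pow, ← map_pow,
            frobeniusEquiv_symm_pow_p]
        rw [h1]
        exact Subalgebra.algebraMap_mem _ _
      | add x y hx hy ihx ihy => rw [map_add, map_add]; exact add_mem ihx ihy
      | mul x y hx hy ihx ihy => rw [map_mul, map_mul]; exact mul_mem ihx ihy
    have h2 : ψ (algebraMap R L r) = algebraMap K L α := by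
      rw [hψ]
      apply (frobeniusEquiv L p).injective
      rw [RingEquiv.apply_symm_apply, frobeniusEquiv_def, ← map_pow, ← hr]
      exact IsScalarTower.algebraMap_apply R K L r
    have hαM : algebraMap K L α ∈ M ⊓ V := by
      constructor
      · rw [← h2]; exact hstep r hrmem
      · exact ⟨α, rfl⟩
    rw [← hY] at hαM
    have main : ∀ z ∈ Submodule.span R (Y : Set L),
        ∃ r' : R, algebraMap R L r' = (b : R) • z := by
      intro z hz
      induction hz using Submodule.span_induction with
      | mem y hy =>
        obtain ⟨ry, hry⟩ := hb y hy
        refine ⟨ry, ?_⟩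
        have hsw : (b : R) • y = algebraMap K L ((b : R) • k y) := by
          conv_lhs => rw [← hk y hy]
          rw [Algebra.smul_def, Algebra.smul_def, map_mul,
            ← IsScalarTower.algebraMap_apply R K L]
        rw [hsw, ← hry, ← IsScalarTower.algebraMap_apply R K L]
      | zero => exact ⟨0, by simp⟩
      | add x y hx hy ihx ihy =>
        obtain ⟨rx, hrx⟩ := ihx
        obtain ⟨ry, hry⟩ := ihy
        exact ⟨rx + ry, by rw [map_add, hrx, hry, smul_add]⟩
      | smul r0 z hz ih =>
        obtain ⟨r', hr'⟩ := ih
        refine ⟨r0 * r', ?_⟩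
        rw [map_mul, hr', smul_comm (b : R) r0 z, Algebra.smul_def r0 ((b : R) • z)]
    obtain ⟨r', hr'⟩ := main _ hαM
    refine ⟨r', ?_⟩
    apply (algebraMap K L).injective
    rw [map_mul, ← IsScalarTower.algebraMap_apply R K L, ← IsScalarTower.algebraMap_apply R K L,
      hr', Algebra.smul_def]
  obtain ⟨c, hc0, hc⟩ := key
  -- escalation of exponents
  have hesc : ∀ (α : K) (m n : ℕ), m ≤ n → α ^ p ^ m ∈ (algebraMap R K).range →
      α ^ p ^ n ∈ (algebraMap R K).range := by
    rintro α m n hmn ⟨r, hr⟩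
    refine ⟨r ^ p ^ (n - m), ?_⟩
    rw [map_pow, hr, ← pow_mul, ← pow_add, Nat.add_sub_cancel' hmn]
  -- the uniform bound `c^2`
  have hc2 : ∀ (m : ℕ) (α : K), α ^ p ^ m ∈ (algebraMap R K).range →
      algebraMap R K (c * c) * α ∈ (algebraMap R K).range := by
    intro m
    induction m with
    | zero =>
      rintro α ⟨r, hr⟩
      exact ⟨c * c * r, by rw [map_mul, hr, pow_zero, pow_one]⟩
    | succ m ih =>
      intro α hα
      have h1 : (α ^ p) ^ p ^ m ∈ (algebraMap R K).range := by
        rw [← pow_mul, ← pow_succ']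
        exact hα
      obtain ⟨r, hr⟩ := ih (α ^ p) h1
      have hcp : c ^ (p - 2) * (c * c) = c ^ p := by
        rw [← pow_two, ← pow_add, Nat.sub_add_cancel hp.two_le]
      have h2 : (algebraMap R K c * α) ^ p ∈ (algebraMap R K).range := by
        refine ⟨c ^ (p - 2) * r, ?_⟩
        calc algebraMap R K (c ^ (p - 2) * r)
            = algebraMap R K (c ^ (p - 2)) * algebraMap R K r := by rw [map_mul]
          _ = algebraMap R K (c ^ (p - 2)) * (algebraMap R K (c * c) * α ^ p) := by rw [hr]
          _ = algebraMap R K (c ^ (p - 2)) * algebraMap R K (c * c) * α ^ p := by ring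
          _ = algebraMap R K (c ^ (p - 2) * (c * c)) * α ^ p := by rw [← map_mul]
          _ = algebraMap R K (c ^ p) * α ^ p := by rw [hcp]
          _ = (algebraMap R K c * α) ^ p := by rw [map_pow, mul_pow]
      obtain ⟨r3, hr3⟩ := hc _ h2
      exact ⟨r3, by rw [hr3, map_mul, mul_assoc]⟩
  -- the p-normalization as an R-subalgebra of K
  let T : Subalgebra R K :=
    { carrier := {α : K | ∃ m : ℕ, α ^ p ^ m ∈ (algebraMap R K).range}
      mul_mem' := by
        rintro x y ⟨mx, hx⟩ ⟨my, hy⟩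
        refine ⟨max mx my, ?_⟩
        rw [mul_pow]
        exact mul_mem (hesc x _ _ (le_max_left _ _) hx) (hesc y _ _ (le_max_right _ _) hy)
      add_mem' := by
        rintro x y ⟨mx, hx⟩ ⟨my, hy⟩
        refine ⟨max mx my, ?_⟩
        rw [add_pow_char_pow]
        exact add_mem (hesc x _ _ (le_max_left _ _) hx) (hesc y _ _ (le_max_right _ _) hy)
      algebraMap_mem' := fun r => ⟨0, by rw [pow_zero, pow_one]; exact ⟨r, rfl⟩⟩ }
  have hcc : algebraMap R K (c * c) ≠ 0 :=
    (map_ne_zero_iff _ (IsFractionRing.injective R K)).mpr (mul_ne_zero hc0 hc0)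
  set W : Submodule R K := Submodule.span R {(algebraMap R K (c * c))⁻¹} with hW
  have hTW : Subalgebra.toSubmodule T ≤ W := by
    rintro α ⟨m, hm⟩
    obtain ⟨r, hr⟩ := hc2 m α hm
    rw [hW, Submodule.mem_span_singleton]
    refine ⟨r, ?_⟩
    rw [Algebra.smul_def, mul_inv_eq_iff_eq_mul₀ hcc, hr]
    exact mul_comm _ _
  have hWfg : W.FG := ⟨{(algebraMap R K (c * c))⁻¹}, by simp [hW]⟩
  haveI : IsNoetherian R W := isNoetherian_of_fg_of_noetherian _ hWfg
  have hTfg : (Subalgebra.toSubmodule T).FG := by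
    have h4 : Submodule.map W.subtype (Submodule.comap W.subtype (Subalgebra.toSubmodule T)) =
        Subalgebra.toSubmodule T := by
      rw [Submodule.map_comap_subtype]
      exact inf_of_le_right hTW
    exact h4 ▸ (IsNoetherian.noetherian _).map _
  obtain ⟨tf, htf⟩ := Subalgebra.fg_of_fg_toSubmodule hTfg
  refine ⟨s.image (algebraMap R K) ∪ tf, ?_⟩
  apply Set.Subset.antisymm
  · have hle : Algebra.adjoin C (↑(s.image (algebraMap R K) ∪ tf) : Set K) ≤
        T.restrictScalars C := by
      apply Algebra.adjoin_le
      intro x hx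
      simp only [Finset.coe_union, Set.mem_union, Finset.coe_image, Set.mem_image,
        Finset.mem_coe] at hx
      rcases hx with ⟨a, -, rfl⟩ | hx
      · exact ⟨0, by rw [pow_zero, pow_one]; exact ⟨a, rfl⟩⟩
      · have hx' : x ∈ Algebra.adjoin R (tf : Set K) := Algebra.subset_adjoin hx
        rw [htf] at hx'
        exact hx'
    exact fun x hx => hle hx
  · intro α hα
    have hαT : α ∈ Algebra.adjoin R (tf : Set K) := by rw [htf]; exact hα
    clear hα
    show α ∈ Algebra.adjoin C (↑(s.image (algebraMap R K) ∪ tf) : Set K)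
    induction hαT using Algebra.adjoin_induction with
    | mem x hx =>
      refine Algebra.subset_adjoin ?_
      simp only [Finset.coe_union, Set.mem_union, Finset.mem_coe]
      exact Or.inr hx
    | algebraMap r =>
      have hr : r ∈ Algebra.adjoin C (s : Set R) := by rw [hs]; exact Algebra.mem_top
      induction hr using Algebra.adjoin_induction with
      | mem z hz =>
        refine Algebra.subset_adjoin ?_
        simp only [Finset.coe_union, Set.mem_union, Finset.coe_image, Set.mem_image,
          Finset.mem_coe]
        exact Or.inl ⟨z, hz, rfl⟩
      | algebraMap c0 =>
        rw [← IsScalarTower.algebraMap_apply C R K]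
        exact Subalgebra.algebraMap_mem _ _
      | add x y hx hy ihx ihy => rw [map_add]; exact add_mem ihx ihy
      | mul x y hx hy ihx ihy => rw [map_mul]; exact mul_mem ihx ihy
    | add x y hx hy ihx ihy => exact add_mem ihx ihy
    | mul x y hx hy ihx ihy => exact mul_mem ihx ihy
end

section
/- Let f : T → R be a C-algebra homomorphism between integral domains over a perfect field C of characteristic p > 0, with R p-normal and K = Frac(R). Then the induced map on Kähler differentials f_* : Ω_T → Ω_K is zero if and only if f(T) ⊆ R^p. -/
open Polynomial

set_option linter.unusedSectionVars false

section Core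
variable {K : Type*} [Field K] {p : ℕ} [Fact p.Prime] [CharP K p]

theorem minpoly_insep (M : Subfield K) (y : K) (hy : y ∉ M) (hc : y ^ p ∈ M) :
    minpoly ↥M y = X ^ p - C (⟨y ^ p, hc⟩ : ↥M) := by
  have hp : p ≠ 0 := (Fact.out : p.Prime).ne_zero
  set c : ↥M := ⟨y ^ p, hc⟩ with hcdef
  have hcK : (algebraMap ↥M K) c = y ^ p := rfl
  have hXP : ((X : K[X]) - C y) ^ p = X ^ p - C (y ^ p) := by
    rw [sub_pow_char, ← C_pow]
  have hmo : (X ^ p - C c).Monic := monic_X_pow_sub_C _ hp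
  have hann : aeval y ((X ^ p - C c : Polynomial ↥M)) = 0 := by
    rw [map_sub, map_pow, aeval_X, aeval_C, hcK, sub_self]
  have hint : IsIntegral ↥M y := ⟨_, hmo, hann⟩
  have hdvd : minpoly ↥M y ∣ X ^ p - C c := minpoly.dvd _ _ hann
  set m := minpoly ↥M y with hm
  have hmmo : m.Monic := minpoly.monic hint
  have hmapdvd : m.map (algebraMap ↥M K) ∣ (X - C y) ^ p := by
    have := Polynomial.map_dvd (algebraMap ↥M K) hdvd
    rwa [Polynomial.map_sub, Polynomial.map_pow, map_X, map_C, hcK, ← hXP] at this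
  obtain ⟨i, hip, hassoc⟩ := (dvd_prime_pow (prime_X_sub_C y) p).mp hmapdvd
  have heq : m.map (algebraMap ↥M K) = (X - C y) ^ i :=
    eq_of_monic_of_associated (hmmo.map _) ((monic_X_sub_C y).pow i) hassoc
  have hdeg : m.natDegree = i := by
    rw [← hmmo.natDegree_map (algebraMap ↥M K), heq, natDegree_pow, natDegree_X_sub_C, mul_one]
  have hi1 : 1 ≤ i := by
    rw [← hdeg]; exact minpoly.natDegree_pos hint
  have hipeq : i = p := by
    by_contra hne
    have hilt : i < p := lt_of_le_of_ne hip hne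
    have hnegi : (-y) ^ i ∈ M := by
      have h1 := congrArg (fun q => q.coeff 0) heq
      simp only [coeff_map, coeff_zero_eq_eval_zero, eval_pow, eval_sub, eval_X, eval_C,
        zero_sub] at h1
      rw [Polynomial.eval_zero_map] at h1
      rw [← h1]
      exact Subtype.coe_prop _
    have hyi : y ^ i ∈ M := by
      have hm1 : ((-1 : K)) ^ i ∈ M := pow_mem (neg_mem M.one_mem) i
      have h2 : ((-1 : K)) ^ i * (-y) ^ i = y ^ i := by
        rw [← mul_pow]; ring_nf
      rw [← h2]
      exact M.mul_mem hm1 hnegi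
    have hy0 : y ≠ 0 := fun h => hy (h ▸ M.zero_mem)
    have hnd : ¬ (p ∣ i) := Nat.not_dvd_of_pos_of_lt hi1 hilt
    have hcop : Nat.Coprime i p := (Nat.coprime_comm.mp ((Nat.Prime.coprime_iff_not_dvd
      (Fact.out : p.Prime)).mpr hnd))
    have hcopZ : IsCoprime (i : ℤ) (p : ℤ) := by
      rw [Int.isCoprime_iff_gcd_eq_one, Int.gcd_natCast_natCast]
      exact hcop
    obtain ⟨a, b, hab⟩ := hcopZ
    have hyeq : ((y ^ (i : ℤ)) ^ a) * ((y ^ (p : ℤ)) ^ b) = y := by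
      rw [← zpow_mul, ← zpow_mul, ← zpow_add₀ hy0, mul_comm ((i : ℤ)) a,
        mul_comm ((p : ℤ)) b, hab, zpow_one]
    apply hy
    rw [← hyeq]
    have m1 : (y : K) ^ (i : ℤ) ∈ M := by rw [zpow_natCast]; exact hyi
    have m2 : (y : K) ^ (p : ℤ) ∈ M := by rw [zpow_natCast]; exact hc
    exact M.mul_mem (M.zpow_mem m1 a) (M.zpow_mem m2 b)
  rw [hipeq, hXP] at heq
  have hinj : Function.Injective (algebraMap ↥M K) := (algebraMap ↥M K).injective
  apply Polynomial.map_injective _ hinj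
  rw [heq, Polynomial.map_sub, Polynomial.map_pow, map_X, map_C, hcK]
variable {M : Subfield K} (d : K → K) (y u : K)

/-- Formal extension of `d` to polynomials, sending `f` to `f'(y)·u + f^d(y)`. -/
noncomputable def Dpoly (f : Polynomial ↥M) : K :=
  f.sum fun n a => (a : K) * (n : K) * y ^ (n - 1) * u + d (a : K) * y ^ n

theorem d_zero' (dp : ∀ a : K, d (a ^ p) = 0) : d 0 = 0 := by
  have := dp 0
  rwa [zero_pow (Fact.out : p.Prime).ne_zero] at this

theorem d_one' (dp : ∀ a : K, d (a ^ p) = 0) : d 1 = 0 := by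
  have := dp 1; rwa [one_pow] at this

theorem Dpoly_monomial (dp : ∀ a : K, d (a ^ p) = 0) (n : ℕ) (a : ↥M) :
    Dpoly d y u (monomial n a) = (a : K) * n * y ^ (n - 1) * u + d a * y ^ n := by
  unfold Dpoly
  rw [sum_monomial_index]
  simp [d_zero' (p := p) d dp]

theorem Dpoly_add (dadd : ∀ a b : K, a ∈ M → b ∈ M → d (a + b) = d a + d b)
    (dp : ∀ a : K, d (a ^ p) = 0) (f g : Polynomial ↥M) :
    Dpoly d y u (f + g) = Dpoly d y u f + Dpoly d y u g := by
  unfold Dpoly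
  rw [sum_add_index]
  · intro n; simp [d_zero' (p := p) d dp]
  · intro n a b
    have h : d ((a : K) + (b : K)) = d a + d b := dadd _ _ a.2 b.2
    push_cast
    rw [h]; ring

theorem pow_aux (k m : ℕ) : (k : K) * y ^ (k - 1) * y ^ m = (k : K) * y ^ (k + m - 1) := by
  cases k with
  | zero => simp
  | succ k => rw [Nat.succ_add, Nat.succ_sub_one, Nat.succ_sub_one, pow_add]; ring

theorem Dpoly_mul (dadd : ∀ a b : K, a ∈ M → b ∈ M → d (a + b) = d a + d b)
    (dmul : ∀ a b : K, a ∈ M → b ∈ M → d (a * b) = a * d b + b * d a)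
    (dp : ∀ a : K, d (a ^ p) = 0) (f g : Polynomial ↥M) :
    Dpoly d y u (f * g) = aeval y f * Dpoly d y u g + aeval y g * Dpoly d y u f := by
  induction f using Polynomial.induction_on' with
  | add f1 f2 h1 h2 =>
    rw [add_mul, Dpoly_add d y u dadd dp, Dpoly_add d y u dadd dp, map_add, h1, h2]; ring
  | monomial m a =>
    induction g using Polynomial.induction_on' with
    | add g1 g2 h1 h2 =>
      rw [mul_add, Dpoly_add d y u dadd dp, Dpoly_add d y u dadd dp, map_add, h1, h2]; ring
    | monomial n b =>
      rw [monomial_mul_monomial, Dpoly_monomial d y u dp, Dpoly_monomial d y u dp,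
        Dpoly_monomial d y u dp, aeval_monomial, aeval_monomial]
      have hd : ((a * b : ↥M) : K) = (a : K) * (b : K) := rfl
      have hd2 : d ((a : K) * (b : K)) = (a : K) * d b + (b : K) * d a := dmul _ _ a.2 b.2
      have A1 : (n : K) * y ^ (n - 1) * y ^ m = (n : K) * y ^ (m + n - 1) := by
        have := pow_aux (K := K) y n m; rwa [Nat.add_comm n m] at this
      have A2 : (m : K) * y ^ (m - 1) * y ^ n = (m : K) * y ^ (m + n - 1) := pow_aux y m n
      have hab : ((algebraMap ↥M K) a) = (a : K) := rfl
      have hbb : ((algebraMap ↥M K) b) = (b : K) := rfl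
      rw [hab, hbb, hd, hd2]
      push_cast
      linear_combination (-((a : K) * (b : K) * u)) * A1 + (-((a : K) * (b : K) * u)) * A2


theorem Dpoly_welldef {M : Subfield K} (d : K → K) (y u : K)
    (dadd : ∀ a b : K, a ∈ M → b ∈ M → d (a + b) = d a + d b)
    (dmul : ∀ a b : K, a ∈ M → b ∈ M → d (a * b) = a * d b + b * d a)
    (dp : ∀ a : K, d (a ^ p) = 0) (hy : y ∉ M) (hc : y ^ p ∈ M) (f g : Polynomial ↥M)
    (h : aeval y f = aeval y g) : Dpoly d y u f = Dpoly d y u g := by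
  set c : ↥M := ⟨y ^ p, hc⟩ with hcdef
  have hdvd : (X ^ p - C c) ∣ (f - g) := by
    rw [← minpoly_insep M y hy hc]
    apply minpoly.dvd
    rw [map_sub, h, sub_self]
  obtain ⟨q, hq⟩ := hdvd
  have hf : f = g + (X ^ p - C c) * q := by rw [← hq]; abel
  have hzero : Dpoly d y u (X ^ p - C c) = 0 := by
    have hm0 : (monomial 0 (-c) : Polynomial ↥M) = -C c := by rw [monomial_zero_left, C_neg]
    have hsplit : (X ^ p - C c : Polynomial ↥M) = monomial p 1 + monomial 0 (-c) := by
      rw [X_pow_eq_monomial, hm0, sub_eq_add_neg]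
    rw [hsplit, Dpoly_add d y u dadd dp, Dpoly_monomial d y u dp, Dpoly_monomial d y u dp]
    have h1 : d ((1 : ↥M) : K) = 0 := by
      have := dp 1; rwa [one_pow] at this
    have h2 : d ((-c : ↥M) : K) = 0 := by
      have hnc : ((-c : ↥M) : K) = (0 - y) ^ p := by
        rw [sub_pow_char, zero_pow (Fact.out : p.Prime).ne_zero]
        push_cast [hcdef]
        ring
      rw [hnc]; exact dp (0 - y)
    rw [h1, h2]
    have hp0 : ((p : K)) = 0 := CharP.cast_eq_zero K p
    simp [hp0]
  have haev : aeval y ((X ^ p - C c : Polynomial ↥M)) = 0 := by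
    rw [map_sub, map_pow, aeval_X, aeval_C]
    have : ((algebraMap ↥M K) c) = y ^ p := rfl
    rw [this, sub_self]
  rw [hf, Dpoly_add d y u dadd dp, Dpoly_mul d y u dadd dmul dp, haev, hzero]
  ring

theorem core (M : Subfield K) (d : K → K)
    (hMp : ∀ a : K, a ^ p ∈ M)
    (dadd : ∀ a b : K, a ∈ M → b ∈ M → d (a + b) = d a + d b)
    (dmul : ∀ a b : K, a ∈ M → b ∈ M → d (a * b) = a * d b + b * d a)
    (dp : ∀ a : K, d (a ^ p) = 0) (y : K) (hy : y ∉ M) (u : K) :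
    ∃ (S : Set K) (e : K → K),
      (∀ a ∈ M, a ∈ S) ∧ y ∈ S ∧ (∀ a ∈ M, e a = d a) ∧ e y = u ∧
      (∀ a b, a ∈ S → b ∈ S → (a + b ∈ S ∧ e (a + b) = e a + e b)) ∧
      (∀ a b, a ∈ S → b ∈ S → (a * b ∈ S ∧ e (a * b) = a * e b + b * e a)) ∧
      (∀ a : K, e (a ^ p) = 0) := by
  classical
  have hc : y ^ p ∈ M := hMp y
  set A := Algebra.adjoin ↥M ({y} : Set K) with hA
  have hmem : ∀ a : K, a ∈ A ↔ ∃ f : Polynomial ↥M, aeval y f = a := by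
    intro a
    rw [hA, Algebra.adjoin_singleton_eq_range_aeval]
    exact AlgHom.mem_range _
  set e : K → K :=
    fun a => if h : a ∈ A then Dpoly d y u (Classical.choose ((hmem a).mp h)) else 0 with he
  have espec : ∀ f : Polynomial ↥M, e (aeval y f) = Dpoly d y u f := by
    intro f
    have hmemf : aeval y f ∈ A := (hmem _).mpr ⟨f, rfl⟩
    have hcs := Classical.choose_spec ((hmem (aeval y f)).mp hmemf)
    rw [he]
    simp only [dif_pos hmemf]
    exact Dpoly_welldef d y u dadd dmul dp hy hc _ f hcs
  have hMS : ∀ a ∈ M, (a : K) ∈ A := by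
    intro a ha
    exact A.algebraMap_mem ⟨a, ha⟩
  have heM : ∀ a ∈ M, e a = d a := by
    intro a ha
    have h1 : aeval y (C (⟨a, ha⟩ : ↥M)) = a := by rw [aeval_C]; rfl
    have := espec (C (⟨a, ha⟩ : ↥M))
    rw [h1] at this
    rw [this, ← monomial_zero_left, Dpoly_monomial d y u dp]
    simp
  refine ⟨A, e, hMS, ?_, heM, ?_, ?_, ?_, ?_⟩
  · exact Algebra.subset_adjoin rfl
  · have h1 : aeval y (X : Polynomial ↥M) = y := aeval_X y
    have := espec X
    rw [h1] at this
    rw [this, ← monomial_one_one_eq_X, Dpoly_monomial d y u dp]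
    have hd1 : d (1 : K) = 0 := by have := dp (1 : K); rwa [one_pow] at this
    simp [hd1]
  · intro a b ha hb
    obtain ⟨f, hf⟩ := (hmem a).mp ha
    obtain ⟨g, hg⟩ := (hmem b).mp hb
    have hsum : aeval y (f + g) = a + b := by rw [map_add, hf, hg]
    constructor
    · exact (hmem _).mpr ⟨f + g, hsum⟩
    · have e1 := espec (f + g)
      rw [hsum] at e1
      rw [e1, Dpoly_add d y u dadd dp, ← espec f, ← espec g, hf, hg]
  · intro a b ha hb
    obtain ⟨f, hf⟩ := (hmem a).mp ha
    obtain ⟨g, hg⟩ := (hmem b).mp hb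
    have hprod : aeval y (f * g) = a * b := by rw [map_mul, hf, hg]
    constructor
    · exact (hmem _).mpr ⟨f * g, hprod⟩
    · have e1 := espec (f * g)
      rw [hprod] at e1
      rw [e1, Dpoly_mul d y u dadd dmul dp, hf, hg, ← espec f, ← espec g, hf, hg]
  · intro a
    rw [heM _ (hMp a)]
    exact dp a

/-- Partial derivation graphs. -/
def IsPD (p : ℕ) (x : K) (G : Set (K × K)) : Prop :=
  (∀ a : K, (a ^ p, 0) ∈ G) ∧ (x, 1) ∈ G ∧
  (∀ a u b v, (a, u) ∈ G → (b, v) ∈ G → (a + b, u + v) ∈ G) ∧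
  (∀ a u b v, (a, u) ∈ G → (b, v) ∈ G → (a * b, a * v + b * u) ∈ G) ∧
  (∀ a u v, (a, u) ∈ G → (a, v) ∈ G → u = v)

theorem exists_pregraph (x : K) (hx : ∀ a : K, a ^ p ≠ x) :
    ∃ G : Set (K × K), IsPD p x G := by
  classical
  set Kp : Subfield K := (frobenius K p).fieldRange with hKp
  have hmemKp : ∀ a : K, a ∈ Kp ↔ ∃ b : K, b ^ p = a := by
    intro a
    constructor
    · rintro ⟨b, hb⟩; exact ⟨b, hb⟩
    · rintro ⟨b, hb⟩; exact ⟨b, hb⟩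
  have hMp : ∀ a : K, a ^ p ∈ Kp := fun a => (hmemKp _).mpr ⟨a, rfl⟩
  have hxKp : x ∉ Kp := by
    intro h
    obtain ⟨b, hb⟩ := (hmemKp x).mp h
    exact hx b hb
  obtain ⟨S₀, e₀, h1, h2, h3, h4, h5, h6, h7⟩ :=
    core Kp (fun _ => 0) hMp (fun _ _ _ _ => by simp) (fun a b _ _ => by simp) (fun _ => rfl)
      x hxKp 1
  refine ⟨{q | q.1 ∈ S₀ ∧ q.2 = e₀ q.1}, ?_, ⟨h2, h4.symm⟩, ?_, ?_, ?_⟩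
  · intro a
    exact ⟨h1 _ (hMp a), (h7 a).symm⟩
  · rintro a u b v ⟨ha, hu⟩ ⟨hb, hv⟩
    obtain ⟨hm, he⟩ := h5 a b ha hb
    exact ⟨hm, by show u + v = e₀ (a + b); rw [he, show u = e₀ a from hu, show v = e₀ b from hv]⟩
  · rintro a u b v ⟨ha, hu⟩ ⟨hb, hv⟩
    obtain ⟨hm, he⟩ := h6 a b ha hb
    exact ⟨hm, by
      show a * v + b * u = e₀ (a * b)
      rw [he, show u = e₀ a from hu, show v = e₀ b from hv]⟩
  · rintro a u v ⟨_, hu⟩ ⟨_, hv⟩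
    exact hu.trans hv.symm

theorem exists_derivation (x : K) (hx : ∀ a : K, a ^ p ≠ x) :
    ∃ D : K → K, (∀ a b : K, D (a + b) = D a + D b) ∧
      (∀ a b : K, D (a * b) = a * D b + b * D a) ∧
      (∀ a : K, D (a ^ p) = 0) ∧ D x = 1 := by
  classical
  have hp1 : 1 ≤ p := (Fact.out : p.Prime).one_lt.le
  obtain ⟨G₀, hG₀⟩ := exists_pregraph x hx
  have hub : ∀ c ⊆ {G : Set (K × K) | IsPD p x G}, IsChain (· ⊆ ·) c → c.Nonempty →
      ∃ ub ∈ {G : Set (K × K) | IsPD p x G}, ∀ s ∈ c, s ⊆ ub := by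
    intro c hcS hchain hcne
    obtain ⟨G1, hG1⟩ := hcne
    refine ⟨⋃₀ c, ⟨?_, ?_, ?_, ?_, ?_⟩, fun s hs => Set.subset_sUnion_of_mem hs⟩
    · intro a; exact ⟨G1, hG1, (hcS hG1).1 a⟩
    · exact ⟨G1, hG1, (hcS hG1).2.1⟩
    · rintro a u b v ⟨Ga, hGa, ha⟩ ⟨Gb, hGb, hb⟩
      rcases hchain.total hGa hGb with h | h
      · exact ⟨Gb, hGb, (hcS hGb).2.2.1 a u b v (h ha) hb⟩
      · exact ⟨Ga, hGa, (hcS hGa).2.2.1 a u b v ha (h hb)⟩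
    · rintro a u b v ⟨Ga, hGa, ha⟩ ⟨Gb, hGb, hb⟩
      rcases hchain.total hGa hGb with h | h
      · exact ⟨Gb, hGb, (hcS hGb).2.2.2.1 a u b v (h ha) hb⟩
      · exact ⟨Ga, hGa, (hcS hGa).2.2.2.1 a u b v ha (h hb)⟩
    · rintro a u v ⟨Ga, hGa, ha⟩ ⟨Gb, hGb, hb⟩
      rcases hchain.total hGa hGb with h | h
      · exact (hcS hGb).2.2.2.2 a u v (h ha) hb
      · exact (hcS hGa).2.2.2.2 a u v ha (h hb)
  obtain ⟨G, hG₀G, hGmax⟩ := zorn_subset_nonempty {G | IsPD p x G} hub G₀ hG₀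
  obtain ⟨hGp, hGx, hGadd, hGmul, hGfun⟩ := hGmax.prop
  set dG : K → K := fun a => if h : ∃ u, (a, u) ∈ G then Classical.choose h else 0 with hdGdef
  have hdG : ∀ a u, (a, u) ∈ G → dG a = u := by
    intro a u hau
    have hex : ∃ w, (a, w) ∈ G := ⟨u, hau⟩
    rw [hdGdef]
    simp only [dif_pos hex]
    exact hGfun a _ u (Classical.choose_spec hex) hau
  have hmemd : ∀ a, (∃ u, (a, u) ∈ G) → (a, dG a) ∈ G := by
    rintro a ⟨u, hu⟩
    rw [hdG a u hu]; exact hu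
  -- totality
  have htot : ∀ a : K, ∃ u, (a, u) ∈ G := by
    by_contra hcon
    push_neg at hcon
    obtain ⟨y, hy⟩ := hcon
    have hone : ((1 : K), (0 : K)) ∈ G := by
      have := hGp (1 : K); rwa [one_pow] at this
    have hzero : ((0 : K), (0 : K)) ∈ G := by
      have := hGp (0 : K); rwa [zero_pow (Fact.out : p.Prime).ne_zero] at this
    have hneg1 : ((-1 : K), (0 : K)) ∈ G := by
      have h1 := hGp (-1 : K)
      rwa [neg_one_pow_char K] at h1
    have hneg : ∀ a u, (a, u) ∈ G → (-a, -u) ∈ G := by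
      intro a u hau
      have := hGmul (-1) 0 a u hneg1 hau
      simpa using this
    have hpow : ∀ (n : ℕ) (a : K), (∃ u, (a, u) ∈ G) → ∃ w, (a ^ n, w) ∈ G := by
      intro n
      induction n with
      | zero => intro a _; exact ⟨0, by simpa using hone⟩
      | succ n ih =>
        rintro a ha
        obtain ⟨w, hw⟩ := ih a ha
        obtain ⟨u, hu⟩ := ha
        exact ⟨a ^ n * u + a * w, by rw [pow_succ]; exact hGmul _ _ _ _ hw hu⟩
    set M : Subfield K :=
      { carrier := {a : K | ∃ u, (a, u) ∈ G}
        zero_mem' := ⟨0, hzero⟩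
        one_mem' := ⟨0, hone⟩
        add_mem' := by rintro a b ⟨u, hu⟩ ⟨v, hv⟩; exact ⟨u + v, hGadd a u b v hu hv⟩
        mul_mem' := by rintro a b ⟨u, hu⟩ ⟨v, hv⟩; exact ⟨a * v + b * u, hGmul a u b v hu hv⟩
        neg_mem' := by rintro a ⟨u, hu⟩; exact ⟨-u, hneg a u hu⟩
        inv_mem' := by
          intro a ha
          rcases eq_or_ne a 0 with rfl | ha0
          · rw [inv_zero]; exact ⟨0, hzero⟩
          · obtain ⟨w, hw⟩ := hpow (p - 1) a ha
            have h2 : ((a⁻¹) ^ p, (0 : K)) ∈ G := hGp _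
            have h3 := hGmul _ _ _ _ hw h2
            have h4 : a ^ (p - 1) * (a⁻¹) ^ p = a⁻¹ := by
              rw [inv_pow]
              rw [show a ^ p = a ^ (p - 1) * a by
                rw [← pow_succ, Nat.sub_add_cancel hp1]]
              field_simp
            rw [h4] at h3
            exact ⟨_, h3⟩ } with hMdef
    have hyM : y ∉ M := by rintro ⟨u, hu⟩; exact hy u hu
    have hMp : ∀ a : K, a ^ p ∈ M := fun a => ⟨0, hGp a⟩
    have hdadd : ∀ a b : K, a ∈ M → b ∈ M → dG (a + b) = dG a + dG b := by
      intro a b ha hb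
      exact hdG _ _ (hGadd a (dG a) b (dG b) (hmemd a ha) (hmemd b hb))
    have hdmul : ∀ a b : K, a ∈ M → b ∈ M → dG (a * b) = a * dG b + b * dG a := by
      intro a b ha hb
      exact hdG _ _ (hGmul a (dG a) b (dG b) (hmemd a ha) (hmemd b hb))
    have hdp : ∀ a : K, dG (a ^ p) = 0 := fun a => hdG _ _ (hGp a)
    obtain ⟨S', e', k1, k2, k3, k4, k5, k6, k7⟩ :=
      core M dG hMp hdadd hdmul hdp y hyM 0
    set G' : Set (K × K) := {q | q.1 ∈ S' ∧ q.2 = e' q.1} with hG'def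
    have hGG' : G ⊆ G' := by
      rintro ⟨a, u⟩ hau
      have haM : a ∈ M := ⟨u, hau⟩
      refine ⟨k1 a haM, ?_⟩
      show u = e' a
      rw [k3 a haM, hdG a u hau]
    have hG'S : IsPD p x G' := by
      refine ⟨?_, ?_, ?_, ?_, ?_⟩
      · intro a
        exact ⟨k1 _ (hMp a), (k7 a).symm⟩
      · exact hGG' hGx
      · rintro a u b v ⟨ha, hu⟩ ⟨hb, hv⟩
        obtain ⟨hm, he⟩ := k5 a b ha hb
        exact ⟨hm, by
          show u + v = e' (a + b)
          rw [he, show u = e' a from hu, show v = e' b from hv]⟩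
      · rintro a u b v ⟨ha, hu⟩ ⟨hb, hv⟩
        obtain ⟨hm, he⟩ := k6 a b ha hb
        exact ⟨hm, by
          show a * v + b * u = e' (a * b)
          rw [he, show u = e' a from hu, show v = e' b from hv]⟩
      · rintro a u v ⟨_, hu⟩ ⟨_, hv⟩
        exact hu.trans hv.symm
    have heq := hGmax.eq_of_ge hG'S hGG'
    have hyG' : (y, e' y) ∈ G' := ⟨k2, rfl⟩
    rw [heq] at hyG'
    exact hy (e' y) hyG'
  -- bundle the derivation
  have hDadd : ∀ a b : K, dG (a + b) = dG a + dG b := fun a b =>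
    hdG _ _ (hGadd a (dG a) b (dG b) (hmemd a (htot a)) (hmemd b (htot b)))
  have hDmul : ∀ a b : K, dG (a * b) = a * dG b + b * dG a := fun a b =>
    hdG _ _ (hGmul a (dG a) b (dG b) (hmemd a (htot a)) (hmemd b (htot b)))
  have hDx : dG x = 1 := hdG _ _ hGx
  exact ⟨dG, hDadd, hDmul, fun a => hdG _ _ (hGp a), hDx⟩

end Core

/-- A domain `R` (in characteristic `p`) is *p-normal* if every element `α` of its fraction
field with `α ^ (p ^ m) ∈ R` for some `m` already lies in `R`. -/
def IsPNormal (p : ℕ) (R : Type*) [CommRing R] [IsDomain R] : Prop :=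
  ∀ α : FractionRing R,
    (∃ m : ℕ, α ^ p ^ m ∈ (algebraMap R (FractionRing R)).range) →
      α ∈ (algebraMap R (FractionRing R)).range

/-- Let `f : T → R` be a `C`-algebra homomorphism between integral domains
over a perfect field `C` of characteristic `p > 0`, with `R` `p`-normal and `K = Frac(R)`.
Then the induced map `f_* : Ω_T → Ω_K` on Kähler differentials is zero (equivalently, since
`Ω_T` is generated by the differentials `d t`, the differential of `f t` vanishes in `Ω_K` for
all `t`) if and only if `f(T) ⊆ R^p`. -/
theorem stmt8 (C T R : Type*) [Field C] [CommRing T] [IsDomain T] [Algebra C T]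
    [CommRing R] [IsDomain R] [Algebra C R]
    (p : ℕ) [Fact p.Prime] [CharP C p] [PerfectRing C p]
    (hR : IsPNormal p R) (f : T →ₐ[C] R) :
    (∀ t : T,
        KaehlerDifferential.D C (FractionRing R) (algebraMap R (FractionRing R) (f t)) = 0)
      ↔ ∀ t : T, ∃ r : R, f t = r ^ p := by
  classical
  set K := FractionRing R with hK
  haveI : CharP K p := charP_of_injective_algebraMap (algebraMap C K).injective p
  constructor
  · intro h t
    set x : K := algebraMap R K (f t) with hx
    have hxp : ∃ a : K, a ^ p = x := by
      by_contra hc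
      push_neg at hc
      obtain ⟨D, hDadd, hDmul, hDpow, hDx⟩ := exists_derivation (p := p) x hc
      have hDone : D 1 = 0 := by
        have := hDpow 1; rwa [one_pow] at this
      have hDalg : ∀ c : C, D (algebraMap C K c) = 0 := by
        intro c
        obtain ⟨c₀, hc₀⟩ := surjective_frobenius C p c
        rw [← hc₀, frobenius_def, map_pow]
        exact hDpow _
      set DC : Derivation C K K :=
        { toFun := D
          map_add' := hDadd
          map_smul' := by
            intro c a
            simp only [RingHom.id_apply]
            rw [Algebra.smul_def, Algebra.smul_def, hDmul, hDalg, mul_zero, add_zero]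
          map_one_eq_zero' := hDone
          leibniz' := by
            intro a b
            rw [smul_eq_mul, smul_eq_mul]
            exact hDmul a b } with hDC
      have hφ := congrArg DC.liftKaehlerDifferential (h t)
      rw [Derivation.liftKaehlerDifferential_comp_D, map_zero] at hφ
      have : (1 : K) = 0 := by
        rw [← hDx]
        exact hφ
      exact one_ne_zero this
    obtain ⟨α, hα⟩ := hxp
    obtain ⟨r, hrα⟩ := hR α ⟨1, by rw [pow_one, hα]; exact ⟨f t, rfl⟩⟩
    refine ⟨r, ?_⟩
    have heq : algebraMap R K (r ^ p) = algebraMap R K (f t) := by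
      rw [map_pow, hrα, hα]
    exact (IsFractionRing.injective R K heq).symm
  · intro h t
    obtain ⟨r, hr⟩ := h t
    rw [hr, map_pow, Derivation.leibniz_pow, ← Nat.cast_smul_eq_nsmul K,
      CharP.cast_eq_zero K p, zero_smul]
end

section
/- Let R be an affine domain over a perfect field C of characteristic p > 0 and P an ideal of R with R/P = C. Then there exists an ideal P' of the p-normalization R' with P' ∩ R = P and R'/P' = C. -/
/-- Let `R` be an affine domain over a perfect field `C` of characteristic
`p > 0`, with fraction field `K`, and `P` an ideal of `R` with `R/P = C`.  Let `R'` be the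
`p`-normalization of `R` inside `K` (a subalgebra whose underlying set is the set of elements
some `p`-power of which lies in `R`), and `ρ : R → R'` the canonical map.  Then there exists an
ideal `P'` of `R'` with `P' ∩ R = P` and `R'/P' = C`. -/
theorem stmt9 (C R K : Type*) [Field C] [CommRing R] [IsDomain R] [Algebra C R]
    (p : ℕ) [Fact p.Prime] [CharP C p] [PerfectRing C p]
    [Algebra.FiniteType C R]
    [Field K] [Algebra R K] [IsFractionRing R K] [Algebra C K] [IsScalarTower C R K]
    (P : Ideal R) (hP : Function.Bijective (algebraMap C (R ⧸ P)))
    (R' : Subalgebra C K)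
    (hR' : (R' : Set K) = {α : K | ∃ m : ℕ, α ^ p ^ m ∈ (algebraMap R K).range})
    (ρ : R →+* R') (hρ : ∀ r : R, (ρ r : K) = algebraMap R K r) :
    ∃ P' : Ideal R',
      Ideal.comap ρ P' = P ∧ Function.Bijective (algebraMap C (R' ⧸ P')) := by
  classical
  haveI hpK : CharP K p := by
    have : CharP C p := inferInstance
    exact charP_of_injective_algebraMap (algebraMap C K).injective p
  set ι := algebraMap R K with hι
  have hinj : Function.Injective ι := IsFractionRing.injective R K
  -- pow injectivity in C
  have hpowinjC : ∀ (k : ℕ) (x y : C), x ^ p ^ k = y ^ p ^ k → x = y := by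
    intro k x y h
    have hsub : (x - y) ^ p ^ k = 0 := by
      rw [sub_pow_char_pow, h, sub_self]
    have := pow_eq_zero_iff (pow_ne_zero k (Fact.out (p := p.Prime)).ne_zero) |>.mp hsub
    exact sub_eq_zero.mp this
  -- the retraction π : R → C
  let e : C ≃+* R ⧸ P := RingEquiv.ofBijective (algebraMap C (R ⧸ P)) hP
  let π : R →+* C := e.symm.toRingHom.comp (Ideal.Quotient.mk P)
  have hπalg : ∀ c : C, π (algebraMap C R c) = c := by
    intro c
    have h1 : Ideal.Quotient.mk P (algebraMap C R c) = algebraMap C (R ⧸ P) c := rfl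
    show e.symm (Ideal.Quotient.mk P (algebraMap C R c)) = c
    rw [h1]
    exact e.symm_apply_apply c
  -- Frobenius root
  let rt : C → C := (frobeniusEquiv C p).symm
  have hrt : ∀ (k : ℕ) (x : C), (rt^[k] x) ^ p ^ k = x := by
    intro k
    induction k with
    | zero => intro x; simp
    | succ n ih =>
      intro x
      have : rt^[n+1] x = rt^[n] (rt x) := Function.iterate_succ_apply rt n x
      rw [this, pow_succ, pow_mul, ih (rt x)]
      exact frobeniusEquiv_symm_pow_p C p x
  -- membership data
  have hmem : ∀ α : R', ∃ (m : ℕ) (r : R), ι r = (α : K) ^ p ^ m := by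
    intro α
    have h2 : (α : K) ∈ (R' : Set K) := α.2
    rw [hR'] at h2
    obtain ⟨m, r, hr⟩ := h2
    exact ⟨m, r, hr⟩
  choose mf rf hrf using hmem
  let φf : R' → C := fun α => rt^[mf α] (π (rf α))
  have hφf₀ : ∀ α : R', (φf α) ^ p ^ mf α = π (rf α) := fun α => hrt _ _
  -- the key spec
  have spec : ∀ (α : R') (k : ℕ) (s : R), ι s = (α : K) ^ p ^ k →
      (φf α) ^ p ^ k = π s := by
    intro α k s hs
    have h1 : ι (rf α ^ p ^ k) = ι (s ^ p ^ mf α) := by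
      rw [map_pow, map_pow, hrf, hs, ← pow_mul, ← pow_mul, mul_comm]
    have h2 : rf α ^ p ^ k = s ^ p ^ mf α := hinj h1
    have h3 : (π (rf α)) ^ p ^ k = (π s) ^ p ^ mf α := by
      rw [← map_pow, ← map_pow, h2]
    apply hpowinjC (mf α)
    rw [← pow_mul, mul_comm, pow_mul, hφf₀, h3]
  -- φ is a ring hom
  have hone : φf 1 = 1 := by
    have := spec 1 0 1 (by simp)
    simpa using this
  have hzero : φf 0 = 0 := by
    have := spec 0 0 0 (by simp)
    simpa using this
  have hmul : ∀ α β : R', φf (α * β) = φf α * φf β := by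
    intro α β
    apply hpowinjC (mf α + mf β)
    have hs : ι (rf α ^ p ^ mf β * rf β ^ p ^ mf α) = ((α * β : R') : K) ^ p ^ (mf α + mf β) := by
      rw [map_mul, map_pow, map_pow, hrf, hrf]
      push_cast
      rw [← pow_mul, ← pow_mul, pow_add, mul_pow, mul_comm (p ^ mf β) (p ^ mf α)]
    rw [spec (α * β) (mf α + mf β) _ hs, map_mul, map_pow, map_pow,
      ← hφf₀ α, ← hφf₀ β, ← pow_mul, ← pow_mul, pow_add, mul_pow,
      mul_comm (p ^ mf β) (p ^ mf α)]
  have hadd : ∀ α β : R', φf (α + β) = φf α + φf β := by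
    intro α β
    apply hpowinjC (mf α + mf β)
    have hs : ι (rf α ^ p ^ mf β + rf β ^ p ^ mf α) = ((α + β : R') : K) ^ p ^ (mf α + mf β) := by
      rw [map_add, map_pow, map_pow, hrf, hrf]
      push_cast
      rw [add_pow_char_pow, ← pow_mul, ← pow_mul, pow_add, mul_comm (p ^ mf β) (p ^ mf α)]
    rw [spec (α + β) (mf α + mf β) _ hs, map_add, map_pow, map_pow,
      ← hφf₀ α, ← hφf₀ β, add_pow_char_pow, ← pow_mul, ← pow_mul, pow_add,
      mul_comm (p ^ mf β) (p ^ mf α)]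
  let φ : R' →+* C :=
    { toFun := φf, map_one' := hone, map_mul' := hmul, map_zero' := hzero, map_add' := hadd }
  have hφalg : ∀ c : C, φ (algebraMap C R' c) = c := by
    intro c
    have hc : ι (algebraMap C R c) = ((algebraMap C R' c : R') : K) ^ p ^ 0 := by
      rw [pow_zero, pow_one]
      have : ((algebraMap C R' c : R') : K) = algebraMap C K c := by
        simp [Subalgebra.algebraMap_eq]
      rw [this, IsScalarTower.algebraMap_apply C R K]
    have := spec (algebraMap C R' c) 0 (algebraMap C R c) hc
    have h' : φf (algebraMap C R' c) = c := by simpa [hπalg c] using this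
    exact h'
  refine ⟨RingHom.ker φ, ?_, ?_⟩
  · ext r
    rw [Ideal.mem_comap, RingHom.mem_ker]
    have hr0 : ι r = ((ρ r : R') : K) ^ p ^ 0 := by rw [pow_zero, pow_one, hρ]
    have hφρ : φ (ρ r) = π r := by
      have := spec (ρ r) 0 r hr0
      have h' : φf (ρ r) = π r := by simpa using this
      exact h'
    rw [hφρ]
    constructor
    · intro h
      have : Ideal.Quotient.mk P r = 0 := by
        have h2 : e.symm (Ideal.Quotient.mk P r) = 0 := h
        have := congrArg e h2
        rwa [e.apply_symm_apply, map_zero] at this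
      exact Ideal.Quotient.eq_zero_iff_mem.mp this
    · intro h
      show e.symm (Ideal.Quotient.mk P r) = 0
      rw [Ideal.Quotient.eq_zero_iff_mem.mpr h, map_zero]
  · constructor
    · intro c c' h
      have h1 : ∀ d : C, algebraMap C (R' ⧸ RingHom.ker φ) d
          = Ideal.Quotient.mk (RingHom.ker φ) (algebraMap C R' d) := fun d => rfl
      rw [h1, h1] at h
      have h2 : algebraMap C R' c - algebraMap C R' c' ∈ RingHom.ker φ :=
        Ideal.Quotient.eq.mp h
      rw [RingHom.mem_ker, map_sub, hφalg, hφalg, sub_eq_zero] at h2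
      exact h2
    · intro x
      obtain ⟨α, rfl⟩ := Ideal.Quotient.mk_surjective x
      refine ⟨φ α, ?_⟩
      have h1 : algebraMap C (R' ⧸ RingHom.ker φ) (φ α)
          = Ideal.Quotient.mk (RingHom.ker φ) (algebraMap C R' (φ α)) := rfl
      rw [h1]
      apply Ideal.Quotient.eq.mpr
      rw [RingHom.mem_ker, map_sub, hφalg, sub_eq_zero]
end

section
/- Let F, G : H → S be local C-algebra homomorphisms from a commutative complete Hopf algebra H over a perfect field C of characteristic p > 0 to a complete local C-algebra S with residue field C. If (F − G)(H) ⊆ S^{p^m} for some m ≥ 1 (where − denotes the group operation on such homomorphisms coming from the Hopf structure), then F and G induce the same homomorphism H/(fr^m(m_H)H) → S/(fr^m(m_S)S). -/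
open IsLocalRing

universe u

lemma isAdicComplete_of_pow_eq_bot {R : Type*} [CommRing R] (J : Ideal R) (n : ℕ)
    (hJ : J ^ n = ⊥) : IsAdicComplete J R := by
  have hbot : ∀ k, n ≤ k → (J ^ k • ⊤ : Submodule R R) = ⊥ := by
    intro k hk
    refine le_bot_iff.mp ?_
    calc (J ^ k • ⊤ : Submodule R R) ≤ J ^ n • ⊤ :=
          Submodule.smul_mono_left (Ideal.pow_le_pow_right hk)
      _ = ⊥ := by rw [hJ, Submodule.bot_smul]
  refine { toIsHausdorff := ⟨?_⟩, toIsPrecomplete := ⟨?_⟩ }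
  · intro x hx
    have := hx n
    rw [hbot n le_rfl, SModEq.bot] at this
    exact this
  · intro f hf
    refine ⟨f n, fun k => ?_⟩
    rcases le_total k n with h | h
    · exact hf h
    · have := hf h
      rw [hbot n le_rfl, SModEq.bot] at this
      rw [this]

/-- Any `C`-algebra map between local `C`-algebras whose residue field of the target is `C`
is automatically local. -/
lemma algHom_mem_maximalIdeal {C H S : Type*} [Field C] [CommRing H] [Algebra C H]
    [IsLocalRing H] [CommRing S] [Algebra C S] [IsLocalRing S]
    (hresS : Function.Bijective (algebraMap C (IsLocalRing.ResidueField S)))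
    (ψ : H →ₐ[C] S) {h : H} (hh : h ∈ IsLocalRing.maximalIdeal H) :
    ψ h ∈ IsLocalRing.maximalIdeal S := by
  set r : H →+* IsLocalRing.ResidueField S :=
    (IsLocalRing.residue S).comp (ψ : H →+* S) with hr
  have hrsurj : Function.Surjective r := by
    intro y
    obtain ⟨c, hc⟩ := hresS.2 y
    exact ⟨algebraMap C H c, by
      simp only [hr, RingHom.comp_apply, RingHom.coe_coe, AlgHom.commutes]
      rw [← hc]
      rfl⟩
  have hker : RingHom.ker r = IsLocalRing.maximalIdeal H :=
    IsLocalRing.eq_maximalIdeal (RingHom.ker_isMaximal_of_surjective r hrsurj)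
  have : h ∈ RingHom.ker r := hker.symm ▸ hh
  rw [RingHom.mem_ker] at this
  exact (Ideal.Quotient.eq_zero_iff_mem).mp this

/-- `H` is a commutative complete Hopf algebra over a perfect field `C` of
characteristic `p > 0` (a Noetherian complete local `C`-algebra with residue field `C`; its
complete Hopf structure is recorded through the natural commutative group structure `add`,
with inverse `neg` and identity the counit `ε`, on the sets of local `C`-algebra
homomorphisms from `H` into complete local Noetherian `C`-algebras).  Let `S` be a complete
local Noetherian `C`-algebra with residue field `C` and `F, G : H → S` local `C`-algebra
homomorphisms.  If `(F − G)(H) ⊆ S^{p^m}` for some `m ≥ 1`, then `F` and `G` induce the same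
homomorphism `H[m] → S[m]`, i.e. `F h − G h` lies in the ideal of `S` generated by the
`p^m`-th powers of the maximal ideal, for every `h ∈ H`. -/
theorem stmt11
    (C : Type u) [Field C] (p : ℕ) [Fact p.Prime] [CharP C p] [PerfectRing C p]
    (H : Type u) [CommRing H] [Algebra C H] [IsLocalRing H] [IsNoetherianRing H]
    [IsAdicComplete (maximalIdeal H) H]
    (hresH : Function.Bijective (algebraMap C (ResidueField H)))
    (S : Type u) [CommRing S] [Algebra C S] [IsLocalRing S] [IsNoetherianRing S]
    [IsAdicComplete (maximalIdeal S) S] [ExpChar S p]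
    (hresS : Function.Bijective (algebraMap C (ResidueField S)))
    -- the counit of `H` (the residue map)
    (ε : H →ₐ[C] C) (hε : ∀ h ∈ maximalIdeal H, ε h = 0)
    -- the group structure on points of the complete Hopf algebra `H`
    (add : ∀ (T : Type u) [CommRing T] [IsLocalRing T] [Algebra C T] [IsNoetherianRing T]
      [IsAdicComplete (maximalIdeal T) T],
      (H →ₐ[C] T) → (H →ₐ[C] T) → (H →ₐ[C] T))
    (neg : ∀ (T : Type u) [CommRing T] [IsLocalRing T] [Algebra C T] [IsNoetherianRing T]
      [IsAdicComplete (maximalIdeal T) T],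
      (H →ₐ[C] T) → (H →ₐ[C] T))
    (hcomm : ∀ (T : Type u) [CommRing T] [IsLocalRing T] [Algebra C T] [IsNoetherianRing T]
      [IsAdicComplete (maximalIdeal T) T] (F G : H →ₐ[C] T), add T F G = add T G F)
    (hassoc : ∀ (T : Type u) [CommRing T] [IsLocalRing T] [Algebra C T] [IsNoetherianRing T]
      [IsAdicComplete (maximalIdeal T) T] (F G K : H →ₐ[C] T),
      add T (add T F G) K = add T F (add T G K))
    (hzero : ∀ (T : Type u) [CommRing T] [IsLocalRing T] [Algebra C T] [IsNoetherianRing T]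
      [IsAdicComplete (maximalIdeal T) T] (F : H →ₐ[C] T),
      add T F ((Algebra.ofId C T).comp ε) = F)
    (hneg : ∀ (T : Type u) [CommRing T] [IsLocalRing T] [Algebra C T] [IsNoetherianRing T]
      [IsAdicComplete (maximalIdeal T) T] (F : H →ₐ[C] T),
      add T F (neg T F) = (Algebra.ofId C T).comp ε)
    (hnat : ∀ (T T' : Type u) [CommRing T] [IsLocalRing T] [Algebra C T] [IsNoetherianRing T]
      [IsAdicComplete (maximalIdeal T) T] [CommRing T'] [IsLocalRing T'] [Algebra C T']
      [IsNoetherianRing T'] [IsAdicComplete (maximalIdeal T') T']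
      (φ : T →ₐ[C] T') (F G : H →ₐ[C] T),
      φ.comp (add T F G) = add T' (φ.comp F) (φ.comp G))
    (hnegnat : ∀ (T T' : Type u) [CommRing T] [IsLocalRing T] [Algebra C T]
      [IsNoetherianRing T] [IsAdicComplete (maximalIdeal T) T] [CommRing T'] [IsLocalRing T']
      [Algebra C T'] [IsNoetherianRing T'] [IsAdicComplete (maximalIdeal T') T']
      (φ : T →ₐ[C] T') (F : H →ₐ[C] T), φ.comp (neg T F) = neg T' (φ.comp F))
    -- the data of the statement
    (m : ℕ) (hm : 1 ≤ m) (F G : H →ₐ[C] S)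
    (hFloc : ∀ h ∈ maximalIdeal H, F h ∈ maximalIdeal S)
    (hGloc : ∀ h ∈ maximalIdeal H, G h ∈ maximalIdeal S)
    (hFG : ∀ h : H, ∃ s : S, (add S F (neg S G)) h = s ^ p ^ m) :
    ∀ h : H, F h - G h ∈
      Ideal.span ((fun s : S => s ^ p ^ m) '' (maximalIdeal S : Set S)) := by
  classical
  set q := p ^ m with hq
  have hq0 : 0 < q := pow_pos (Nat.Prime.pos Fact.out) m
  set I : Ideal S := Ideal.span ((fun s : S => s ^ p ^ m) '' (maximalIdeal S : Set S)) with hI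
  -- `I` is contained in the maximal ideal
  have hIle : I ≤ maximalIdeal S := by
    rw [hI, Ideal.span_le]
    rintro _ ⟨s, hs, rfl⟩
    exact Ideal.pow_mem_of_mem _ hs _ hq0
  have hInetop : I ≠ ⊤ := fun htop => (maximalIdeal.isMaximal S).ne_top (top_le_iff.mp (htop ▸ hIle))
  -- the quotient ring
  set Q := S ⧸ I with hQ
  haveI : Nontrivial Q := Ideal.Quotient.nontrivial_iff.mpr hInetop
  haveI hQloc : IsLocalRing Q :=
    IsLocalRing.of_surjective' (Ideal.Quotient.mk I) Ideal.Quotient.mk_surjective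
  haveI hQnoe : IsNoetherianRing Q := by
    exact isNoetherianRing_of_surjective S Q (Ideal.Quotient.mk I) Ideal.Quotient.mk_surjective
  -- the maximal ideal of `Q` is nilpotent, so `Q` is adically complete
  obtain ⟨N, hN⟩ : ∃ N : ℕ, (maximalIdeal S) ^ N ≤ I := by
    refine Ideal.exists_pow_le_of_le_radical_of_fg ?_ (IsNoetherian.noetherian _)
    intro s hs
    exact ⟨q, Ideal.subset_span ⟨s, hs, rfl⟩⟩
  have hmQ : maximalIdeal Q ≤ Ideal.map (Ideal.Quotient.mk I) (maximalIdeal S) := by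
    intro x hx
    obtain ⟨s, rfl⟩ := Ideal.Quotient.mk_surjective x
    by_cases hsm : s ∈ maximalIdeal S
    · exact Ideal.mem_map_of_mem _ hsm
    · exact absurd (((IsLocalRing.mem_maximalIdeal s).not_left.mp hsm).map
        (Ideal.Quotient.mk I)) hx
  have hnil : (maximalIdeal Q) ^ N = ⊥ := by
    refine le_bot_iff.mp ?_
    calc (maximalIdeal Q) ^ N
        ≤ (Ideal.map (Ideal.Quotient.mk I) (maximalIdeal S)) ^ N :=
          Ideal.pow_right_mono hmQ N
      _ = Ideal.map (Ideal.Quotient.mk I) ((maximalIdeal S) ^ N) := (Ideal.map_pow _ _ _).symm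
      _ ≤ Ideal.map (Ideal.Quotient.mk I) I := Ideal.map_mono hN
      _ = ⊥ := by rw [Ideal.map_quotient_self]
  haveI hQcomp : IsAdicComplete (maximalIdeal Q) Q := isAdicComplete_of_pow_eq_bot _ N hnil
  -- the quotient map as a `C`-algebra map
  set φ : S →ₐ[C] Q := Ideal.Quotient.mkₐ C I with hφ
  set D : H →ₐ[C] S := add S F (neg S G) with hD
  -- kernel of ε is the maximal ideal
  have hkerε : ∀ h : H, ε h = 0 → h ∈ maximalIdeal H := by
    intro h hh
    have hsurj : Function.Surjective (ε : H →+* C) := fun c => ⟨algebraMap C H c, ε.commutes c⟩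
    have : RingHom.ker (ε : H →+* C) = maximalIdeal H :=
      IsLocalRing.eq_maximalIdeal (RingHom.ker_isMaximal_of_surjective _ hsurj)
    exact this ▸ RingHom.mem_ker.mpr hh
  -- `φ ∘ D` is the identity element
  have hDzero : φ.comp D = (Algebra.ofId C Q).comp ε := by
    ext h
    set c : C := ε h with hc
    set n : H := h - algebraMap C H c with hn
    have hnm : n ∈ maximalIdeal H := by
      refine hkerε n ?_
      simp [hn, hc]
    have hDn : D n ∈ I := by
      obtain ⟨s, hs⟩ := hFG n
      have hDnm : D n ∈ maximalIdeal S := algHom_mem_maximalIdeal hresS D hnm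
      have hsm : s ∈ maximalIdeal S := by
        refine (IsLocalRing.maximalIdeal.isMaximal S).isPrime.mem_of_pow_mem q ?_
        rwa [← hs]
      rw [hs]
      exact Ideal.subset_span ⟨s, hsm, rfl⟩
    have hsplit : h = algebraMap C H c + n := by rw [hn]; ring
    calc (φ.comp D) h = φ (D (algebraMap C H c + n)) := by rw [← hsplit]; rfl
      _ = φ (algebraMap C S c) + φ (D n) := by rw [map_add, D.commutes, map_add]
      _ = algebraMap C Q c := by
          have hz : φ (D n) = 0 := by
            show Ideal.Quotient.mk I (D n) = 0
            exact (Ideal.Quotient.eq_zero_iff_mem).mpr hDn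
          rw [hz, add_zero, AlgHom.commutes]
      _ = ((Algebra.ofId C Q).comp ε) h := rfl
  -- transport the group identity along φ and cancel
  have h1 : add Q (φ.comp F) (neg Q (φ.comp G)) = (Algebra.ofId C Q).comp ε := by
    rw [← hnegnat S Q φ G, ← hnat S Q φ F (neg S G)]
    exact hDzero
  have key : φ.comp F = φ.comp G := by
    calc φ.comp F = add Q (φ.comp F) ((Algebra.ofId C Q).comp ε) := (hzero Q _).symm
      _ = add Q (φ.comp F) (add Q (neg Q (φ.comp G)) (φ.comp G)) := by
          rw [hcomm Q (neg Q (φ.comp G)) (φ.comp G), hneg Q (φ.comp G)]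
      _ = add Q (add Q (φ.comp F) (neg Q (φ.comp G))) (φ.comp G) := (hassoc Q _ _ _).symm
      _ = add Q ((Algebra.ofId C Q).comp ε) (φ.comp G) := by rw [h1]
      _ = add Q (φ.comp G) ((Algebra.ofId C Q).comp ε) := hcomm Q _ _
      _ = φ.comp G := hzero Q _
  intro h
  have : φ (F h) = φ (G h) := by rw [show φ (F h) = (φ.comp F) h from rfl, key]; rfl
  have hz : φ (F h - G h) = 0 := by rw [map_sub, this, sub_self]
  have hz' : Ideal.Quotient.mk I (F h - G h) = 0 := hz
  exact (Ideal.Quotient.eq_zero_iff_mem).mp hz'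
end

section
/- Every A-compatible sequence of local C-algebra homomorphisms (f_m : T → R) is strongly Cauchy. -/
open IsLocalRing

universe u


theorem smul_top_eq' {R : Type u} [CommRing R] (I : Ideal R) :
    (I • ⊤ : Submodule R R) = I := by
  rw [smul_eq_mul, Ideal.mul_top]

theorem quot_map_maximalIdeal {S : Type u} [CommRing S] [IsLocalRing S]
    (I : Ideal S) (hI : I ≤ maximalIdeal S) [IsLocalRing (S ⧸ I)] :
    maximalIdeal (S ⧸ I) = Ideal.map (Ideal.Quotient.mk I) (maximalIdeal S) := by
  have hsurj : Function.Surjective (Ideal.Quotient.mk I) := Ideal.Quotient.mk_surjective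
  apply le_antisymm
  · intro x hx
    obtain ⟨s, rfl⟩ := hsurj x
    by_cases hs : s ∈ maximalIdeal S
    · exact Ideal.mem_map_of_mem _ hs
    · exfalso
      have : IsUnit s := not_not.mp hs
      exact hx (this.map (Ideal.Quotient.mk I))
  · apply IsLocalRing.le_maximalIdeal
    intro htop
    have := Ideal.comap_map_of_surjective (Ideal.Quotient.mk I) hsurj (maximalIdeal S)
    rw [htop, Ideal.comap_top] at this
    rw [← RingHom.ker_eq_comap_bot, Ideal.mk_ker, sup_eq_left.mpr hI] at this
    exact (maximalIdeal.isMaximal S).ne_top this.symm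

theorem quot_adicComplete {S : Type u} [CommRing S] [IsLocalRing S] [IsNoetherianRing S]
    [IsAdicComplete (maximalIdeal S) S] (I : Ideal S) (hI : I ≤ maximalIdeal S)
    [IsLocalRing (S ⧸ I)] :
    IsAdicComplete (maximalIdeal (S ⧸ I)) (S ⧸ I) := by
  have hmax := quot_map_maximalIdeal I hI
  have hsurj : Function.Surjective (Ideal.Quotient.mk I) := Ideal.Quotient.mk_surjective
  have hpow : ∀ n : ℕ, (maximalIdeal (S ⧸ I)) ^ n
      = Ideal.map (Ideal.Quotient.mk I) ((maximalIdeal S) ^ n) := by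
    intro n; rw [hmax, Ideal.map_pow]
  refine { haus' := fun x hx => ?_, prec' := fun f hf => ?_ }
  ·
    have hbot : (⨅ n : ℕ, (maximalIdeal (S ⧸ I)) ^ n) = ⊥ :=
      Ideal.iInf_pow_eq_bot_of_isLocalRing _ (maximalIdeal.isMaximal _).ne_top
    have hmem : x ∈ (⨅ n : ℕ, (maximalIdeal (S ⧸ I)) ^ n) := by
      rw [Submodule.mem_iInf]
      intro n
      have := hx n
      rw [SModEq.zero, smul_top_eq'] at this
      exact this
    rw [hbot] at hmem
    simpa using hmem
  · have hd : ∀ n : ℕ, ∃ e : S, e ∈ (maximalIdeal S) ^ n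
        ∧ Ideal.Quotient.mk I e = f (n + 1) - f n := by
      intro n
      have h1 : f (n + 1) - f n ∈ (maximalIdeal (S ⧸ I)) ^ n := by
        have h2 := hf (Nat.le_succ n)
        rw [smul_top_eq'] at h2
        exact SModEq.sub_mem.mp h2.symm
      rw [hpow, Ideal.mem_map_iff_of_surjective _ hsurj] at h1
      obtain ⟨e, he1, he2⟩ := h1
      exact ⟨e, he1, he2⟩
    choose d hdmem hdeq using hd
    obtain ⟨g0, hg0⟩ := hsurj (f 0)
    set g : ℕ → S := fun n => Nat.rec g0 (fun k gk => gk + d k) n with hg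
    have hπg : ∀ n, Ideal.Quotient.mk I (g n) = f n := by
      intro n
      induction n with
      | zero => exact hg0
      | succ k ih =>
        show Ideal.Quotient.mk I (g k + d k) = f (k + 1)
        rw [map_add, ih, hdeq]; ring
    have hgc : ∀ a b : ℕ, a ≤ b → g b - g a ∈ (maximalIdeal S) ^ a := by
      intro a b hab
      induction b, hab using Nat.le_induction with
      | base => simp
      | succ k hk ih =>
        have heq : g (k + 1) - g a = (g k - g a) + d k := by
          show g k + d k - g a = _; ring
        rw [heq]
        exact Ideal.add_mem _ ih (Ideal.pow_le_pow_right hk (hdmem k))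
    have hcau : ∀ {a b : ℕ}, a ≤ b →
        g a ≡ g b [SMOD ((maximalIdeal S) ^ a • ⊤ : Submodule S S)] := by
      intro a b hab
      rw [SModEq.sub_mem, smul_top_eq']
      have := neg_mem (hgc a b hab)
      simpa using this
    obtain ⟨L, hL⟩ :=
      IsPrecomplete.prec (IsAdicComplete.toIsPrecomplete (I := maximalIdeal S) (M := S)) hcau
    refine ⟨Ideal.Quotient.mk I L, fun n => ?_⟩
    rw [SModEq.sub_mem, smul_top_eq', ← hπg n, ← map_sub, hpow]
    apply Ideal.mem_map_of_mem
    have := hL n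
    rw [SModEq.sub_mem, smul_top_eq'] at this
    exact this


theorem alghom_maps_maximalIdeal {C H W : Type u} [Field C] [CommRing H] [Algebra C H]
    [IsLocalRing H] [CommRing W] [Algebra C W] [IsLocalRing W]
    (hres : Function.Surjective (algebraMap C (ResidueField W)))
    (ε : H →ₐ[C] C) (hε : ∀ h ∈ maximalIdeal H, ε h = 0)
    (f : H →ₐ[C] W) {h : H} (hh : h ∈ maximalIdeal H) : f h ∈ maximalIdeal W := by
  obtain ⟨c, hc⟩ := hres (residue W (f h))
  by_cases hc0 : c = 0
  · have h0 : residue W (f h) = 0 := by rw [← hc, hc0, map_zero]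
    exact (IsLocalRing.residue_eq_zero_iff _).mp h0
  · exfalso
    have hu : IsUnit (h - algebraMap C H c) := by
      by_contra hnu
      have hmem : h - algebraMap C H c ∈ maximalIdeal H := by
        rwa [IsLocalRing.mem_maximalIdeal, mem_nonunits_iff]
      have h1 := hε _ hmem
      rw [map_sub, hε h hh, AlgHom.commutes] at h1
      simp only [Algebra.algebraMap_self_apply, zero_sub, neg_eq_zero] at h1
      exact hc0 h1
    have hu2 : IsUnit (f h - algebraMap C W c) := by
      have := hu.map f
      rwa [map_sub, AlgHom.commutes] at this
    have hmem2 : f h - algebraMap C W c ∈ maximalIdeal W := by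
      rw [← IsLocalRing.residue_eq_zero_iff, map_sub]
      have e1 : residue W (algebraMap C W c) = algebraMap C (ResidueField W) c := rfl
      rw [e1, hc]
      ring
    exact hmem2 hu2

/-- Every `A`-compatible sequence is strongly Cauchy.  Here `A` is a
commutative algebraic group over a perfect field `C` of characteristic `p > 0`; the complete
local Hopf algebra `H` is the completion of the local ring `T = O_{A,0}` of `A` at the
identity (with its group structure `add`/`neg` on points into complete local Noetherian
`C`-algebras, identity the counit `ε`), and `S` is (the completion of) a Noetherian local
`C`-algebra `R` with residue field `C`.  A sequence of local `C`-algebra homomorphisms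
`(f_m : H → S)` is `A`-compatible if for each `m` the Hopf-difference `f_{m+1} − f_m` lands
in the subring `S^{p^{m+1}}` of `p^{m+1}`-th powers; strongly Cauchy means that `f_m` and
`f_{m+1}` induce the same map modulo the ideal generated by the `p^{m+1}`-th powers of the
maximal ideal. -/
theorem stmt14
    (C : Type u) [Field C] (p : ℕ) [Fact p.Prime] [CharP C p] [PerfectRing C p]
    (H : Type u) [CommRing H] [Algebra C H] [IsLocalRing H] [IsNoetherianRing H]
    [IsAdicComplete (maximalIdeal H) H]
    (hresH : Function.Bijective (algebraMap C (ResidueField H)))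
    (S : Type u) [CommRing S] [Algebra C S] [IsLocalRing S] [IsNoetherianRing S]
    [IsAdicComplete (maximalIdeal S) S] [ExpChar S p]
    (hresS : Function.Bijective (algebraMap C (ResidueField S)))
    -- the counit of `H` (the residue map)
    (ε : H →ₐ[C] C) (hε : ∀ h ∈ maximalIdeal H, ε h = 0)
    -- the group structure on points of the complete Hopf algebra `H`
    (add : ∀ (T : Type u) [CommRing T] [IsLocalRing T] [Algebra C T] [IsNoetherianRing T]
      [IsAdicComplete (maximalIdeal T) T],
      (H →ₐ[C] T) → (H →ₐ[C] T) → (H →ₐ[C] T))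
    (neg : ∀ (T : Type u) [CommRing T] [IsLocalRing T] [Algebra C T] [IsNoetherianRing T]
      [IsAdicComplete (maximalIdeal T) T],
      (H →ₐ[C] T) → (H →ₐ[C] T))
    (hcomm : ∀ (T : Type u) [CommRing T] [IsLocalRing T] [Algebra C T] [IsNoetherianRing T]
      [IsAdicComplete (maximalIdeal T) T] (F G : H →ₐ[C] T), add T F G = add T G F)
    (hassoc : ∀ (T : Type u) [CommRing T] [IsLocalRing T] [Algebra C T] [IsNoetherianRing T]
      [IsAdicComplete (maximalIdeal T) T] (F G K : H →ₐ[C] T),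
      add T (add T F G) K = add T F (add T G K))
    (hzero : ∀ (T : Type u) [CommRing T] [IsLocalRing T] [Algebra C T] [IsNoetherianRing T]
      [IsAdicComplete (maximalIdeal T) T] (F : H →ₐ[C] T),
      add T F ((Algebra.ofId C T).comp ε) = F)
    (hneg : ∀ (T : Type u) [CommRing T] [IsLocalRing T] [Algebra C T] [IsNoetherianRing T]
      [IsAdicComplete (maximalIdeal T) T] (F : H →ₐ[C] T),
      add T F (neg T F) = (Algebra.ofId C T).comp ε)
    (hnat : ∀ (T T' : Type u) [CommRing T] [IsLocalRing T] [Algebra C T] [IsNoetherianRing T]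
      [IsAdicComplete (maximalIdeal T) T] [CommRing T'] [IsLocalRing T'] [Algebra C T']
      [IsNoetherianRing T'] [IsAdicComplete (maximalIdeal T') T']
      (φ : T →ₐ[C] T') (F G : H →ₐ[C] T),
      φ.comp (add T F G) = add T' (φ.comp F) (φ.comp G))
    (hnegnat : ∀ (T T' : Type u) [CommRing T] [IsLocalRing T] [Algebra C T]
      [IsNoetherianRing T] [IsAdicComplete (maximalIdeal T) T] [CommRing T'] [IsLocalRing T']
      [Algebra C T'] [IsNoetherianRing T'] [IsAdicComplete (maximalIdeal T') T']
      (φ : T →ₐ[C] T') (F : H →ₐ[C] T), φ.comp (neg T F) = neg T' (φ.comp F))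
    -- the `A`-compatible sequence
    (F : ℕ → (H →ₐ[C] S))
    (hFloc : ∀ (m : ℕ), ∀ h ∈ maximalIdeal H, F m h ∈ maximalIdeal S)
    (hcompat : ∀ (m : ℕ) (h : H), ∃ s : S,
      (add S (F (m + 1)) (neg S (F m))) h = s ^ p ^ (m + 1)) :
    -- the sequence is strongly Cauchy
    ∀ (m : ℕ) (h : H), F (m + 1) h - F m h ∈
      Ideal.span ((fun s : S => s ^ p ^ (m + 1)) '' (maximalIdeal S : Set S)) := by
  
  intro m h
  -- the ideal of p^(m+1)-th powers of the maximal ideal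
  set I : Ideal S := Ideal.span ((fun s : S => s ^ p ^ (m + 1)) '' (maximalIdeal S : Set S))
    with hIdef
  have hq : 0 < p ^ (m + 1) := pow_pos (Fact.out (p := p.Prime)).pos _
  have hIle : I ≤ maximalIdeal S := by
    rw [hIdef, Ideal.span_le]
    rintro _ ⟨s, hs, rfl⟩
    exact Ideal.pow_mem_of_mem _ hs _ hq
  have hInetop : I ≠ ⊤ := fun htop => (maximalIdeal.isMaximal S).ne_top
    (top_le_iff.mp (htop ▸ hIle))
  haveI : Nontrivial (S ⧸ I) := Ideal.Quotient.nontrivial_iff.mpr hInetop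
  haveI : IsLocalRing (S ⧸ I) :=
    IsLocalRing.of_surjective' (Ideal.Quotient.mk I) Ideal.Quotient.mk_surjective
  haveI : IsAdicComplete (maximalIdeal (S ⧸ I)) (S ⧸ I) := quot_adicComplete I hIle
  have hmaxQ := quot_map_maximalIdeal I hIle
  -- residue surjectivity for the quotient
  have hresQ : Function.Surjective (algebraMap C (ResidueField (S ⧸ I))) := by
    intro x
    obtain ⟨y, rfl⟩ := IsLocalRing.residue_surjective (R := S ⧸ I) x
    obtain ⟨s, rfl⟩ := Ideal.Quotient.mk_surjective y
    obtain ⟨c, hc⟩ := hresS.2 (residue S s)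
    refine ⟨c, ?_⟩
    have h1 : s - algebraMap C S c ∈ maximalIdeal S := by
      rw [← IsLocalRing.residue_eq_zero_iff, map_sub]
      have e1 : residue S (algebraMap C S c) = algebraMap C (ResidueField S) c := rfl
      rw [e1, hc]
      ring
    have h2 : Ideal.Quotient.mk I s - algebraMap C (S ⧸ I) c ∈ maximalIdeal (S ⧸ I) := by
      rw [hmaxQ]
      have e2 : Ideal.Quotient.mk I s - algebraMap C (S ⧸ I) c
          = Ideal.Quotient.mk I (s - algebraMap C S c) := by
        rw [map_sub]; rfl
      rw [e2]
      exact Ideal.mem_map_of_mem _ h1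
    have e3 : algebraMap C (ResidueField (S ⧸ I)) c
        = residue (S ⧸ I) (algebraMap C (S ⧸ I) c) := rfl
    have h3 : residue (S ⧸ I) (Ideal.Quotient.mk I s - algebraMap C (S ⧸ I) c) = 0 :=
      (IsLocalRing.residue_eq_zero_iff _).mpr h2
    rw [map_sub, sub_eq_zero] at h3
    rw [e3]
    exact h3.symm
  -- kernel of the counit is the maximal ideal
  have hker : ∀ y : H, ε y = 0 → y ∈ maximalIdeal H := by
    intro y hy
    by_contra hmem
    have hu : IsUnit y := by
      rwa [IsLocalRing.mem_maximalIdeal, mem_nonunits_iff, not_not] at hmem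
    have : IsUnit (ε y) := hu.map ε
    rw [hy] at this
    exact not_isUnit_zero this
  -- the difference homomorphism
  set G : H →ₐ[C] S := add S (F (m + 1)) (neg S (F m)) with hGdef
  have hGloc : ∀ x ∈ maximalIdeal H, G x ∈ maximalIdeal S :=
    fun x hx => alghom_maps_maximalIdeal hresS.2 ε hε G hx
  set π : S →ₐ[C] S ⧸ I := Ideal.Quotient.mkₐ C I with hπdef
  -- π ∘ G is the counit point
  have hπG : π.comp G = (Algebra.ofId C (S ⧸ I)).comp ε := by
    ext x
    have hn : x - algebraMap C H (ε x) ∈ maximalIdeal H := by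
      apply hker
      rw [map_sub, AlgHom.commutes]
      simp
    obtain ⟨s, hs⟩ := hcompat m (x - algebraMap C H (ε x))
    have hsm : s ∈ maximalIdeal S := by
      refine (maximalIdeal.isMaximal S).isPrime.mem_of_pow_mem (p ^ (m + 1)) ?_
      rw [← hs]
      exact hGloc _ hn
    have hGI : G (x - algebraMap C H (ε x)) ∈ I := by
      rw [hs, hIdef]
      exact Ideal.subset_span ⟨s, hsm, rfl⟩
    have hx : x = algebraMap C H (ε x) + (x - algebraMap C H (ε x)) := by ring
    show π (G x) = (Algebra.ofId C (S ⧸ I)) (ε x)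
    conv_lhs => rw [hx]
    rw [map_add, map_add, AlgHom.commutes]
    have hz : π (G (x - algebraMap C H (ε x))) = 0 := by
      show Ideal.Quotient.mk I _ = 0
      rwa [Ideal.Quotient.eq_zero_iff_mem]
    rw [hz, add_zero]
    rfl
  -- group computation : add G (F m) = F (m+1)
  have hGF : add S G (F m) = F (m + 1) := by
    rw [hGdef, hassoc, hcomm S (neg S (F m)) (F m), hneg, hzero]
  -- conclude
  have hfinal : π.comp (F (m + 1)) = π.comp (F m) := by
    rw [← hGF, hnat S (S ⧸ I) π G (F m), hπG, hcomm, hzero]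
  have heval : π (F (m + 1) h) = π (F m h) := by
    rw [← AlgHom.comp_apply, ← AlgHom.comp_apply, hfinal]
  have : Ideal.Quotient.mk I (F (m + 1) h) = Ideal.Quotient.mk I (F m h) := heval
  exact Ideal.Quotient.eq.mp this
end

section
/- Let (f_m : T → R) be an A-compatible sequence with limit F : T̂ → R̂. Then F is the 0-map (i.e., F(m_{T̂}) = 0) if and only if for all k, f_k(T) ⊆ R^{p^{k+1}}. -/
open IsLocalRing

universe u

/-- Type synonym realizing the Frobenius twist `S^{(p^e)}`. -/
def Tw (S : Type u) (_p _e : ℕ) : Type u := S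

instance TwCommRing (S : Type u) (p e : ℕ) [CommRing S] : CommRing (Tw S p e) :=
  inferInstanceAs (CommRing S)

instance TwLocal (S : Type u) (p e : ℕ) [CommRing S] [IsLocalRing S] :
    IsLocalRing (Tw S p e) :=
  inferInstanceAs (IsLocalRing S)

instance TwNoeth (S : Type u) (p e : ℕ) [CommRing S] [IsNoetherianRing S] :
    IsNoetherianRing (Tw S p e) :=
  inferInstanceAs (IsNoetherianRing S)

instance TwAdic (S : Type u) (p e : ℕ) [CommRing S] [IsLocalRing S]
    [IsAdicComplete (maximalIdeal S) S] :
    IsAdicComplete (maximalIdeal (Tw S p e)) (Tw S p e) :=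
  inferInstanceAs (IsAdicComplete (maximalIdeal S) S)

noncomputable instance TwAlgebra (C : Type u) (S : Type u) (p e : ℕ) [Field C] [Fact p.Prime]
    [CharP C p] [PerfectRing C p] [CommRing S] [Algebra C S] : Algebra C (Tw S p e) :=
  ((algebraMap C S).comp ((iterateFrobeniusEquiv C p e).symm : C ≃+* C).toRingHom).toAlgebra

theorem twAlgebraMap (C : Type u) (S : Type u) (p e : ℕ) [Field C] [Fact p.Prime]
    [CharP C p] [PerfectRing C p] [CommRing S] [Algebra C S] (c : C) :
    algebraMap C (Tw S p e) c = algebraMap C S ((iterateFrobeniusEquiv C p e).symm c) := rfl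

/-- The `e`-fold Frobenius as a `C`-algebra homomorphism from the twist. -/
noncomputable def twHom (C : Type u) (S : Type u) (p e : ℕ) [Field C] [Fact p.Prime]
    [CharP C p] [PerfectRing C p] [CommRing S] [Algebra C S] [ExpChar S p] :
    Tw S p e →ₐ[C] S where
  toRingHom := (iterateFrobenius S p e : S →+* S)
  commutes' := fun c => by
    show iterateFrobenius S p e (algebraMap C S ((iterateFrobeniusEquiv C p e).symm c))
        = algebraMap C S c
    rw [iterateFrobenius_def, ← map_pow, ← iterateFrobeniusEquiv_def,
      RingEquiv.apply_symm_apply]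

theorem twHom_apply (C : Type u) (S : Type u) (p e : ℕ) [Field C] [Fact p.Prime]
    [CharP C p] [PerfectRing C p] [CommRing S] [Algebra C S] [ExpChar S p] (x : S) :
    twHom C S p e x = x ^ p ^ e := rfl

theorem quotLocal {T : Type u} [CommRing T] [IsLocalRing T] {I : Ideal T}
    (hI : I ≠ ⊤) : IsLocalRing (T ⧸ I) :=
  haveI : Nontrivial (T ⧸ I) := Ideal.Quotient.nontrivial_iff.mpr hI
  IsLocalRing.of_surjective' (Ideal.Quotient.mk I) Ideal.Quotient.mk_surjective

theorem quotMax {T : Type u} [CommRing T] [IsLocalRing T] {I : Ideal T}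
    [IsLocalRing (T ⧸ I)] (hI : I ≤ maximalIdeal T) :
    maximalIdeal (T ⧸ I) = (maximalIdeal T).map (Ideal.Quotient.mk I) := by
  apply le_antisymm
  · intro x hx
    obtain ⟨y, rfl⟩ := Ideal.Quotient.mk_surjective x
    have hy : y ∈ maximalIdeal T := by
      rw [IsLocalRing.mem_maximalIdeal, mem_nonunits_iff]
      intro hu
      exact mem_nonunits_iff.mp ((IsLocalRing.mem_maximalIdeal _).mp hx)
        (hu.map (Ideal.Quotient.mk I))
    exact Ideal.mem_map_of_mem _ hy
  · rw [Ideal.map_le_iff_le_comap]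
    intro y hy
    show Ideal.Quotient.mk I y ∈ maximalIdeal (T ⧸ I)
    rw [IsLocalRing.mem_maximalIdeal, mem_nonunits_iff]
    intro hu
    obtain ⟨z, hz⟩ := isUnit_iff_exists_inv.mp hu
    obtain ⟨w, rfl⟩ := Ideal.Quotient.mk_surjective z
    rw [← map_mul, ← map_one (Ideal.Quotient.mk I), Ideal.Quotient.eq] at hz
    have h1 : (1 : T) ∈ maximalIdeal T := by
      have hyw : y * w ∈ maximalIdeal T := Ideal.mul_mem_right _ _ hy
      have h2 := Ideal.sub_mem _ hyw (hI hz)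
      simpa using h2
    exact (IsLocalRing.maximalIdeal.isMaximal T).ne_top ((Ideal.eq_top_iff_one _).mpr h1)

theorem adicCompleteOfNilpotent {T : Type u} [CommRing T] {K : Ideal T} {n : ℕ}
    (h : K ^ n = ⊥) : IsAdicComplete K T := by
  refine { toIsHausdorff := ⟨fun x hx => ?_⟩, toIsPrecomplete := ⟨fun f hf => ?_⟩ }
  · have := hx n
    rw [SModEq.zero, h, Submodule.bot_smul] at this
    simpa using this
  · refine ⟨f n, fun m => ?_⟩
    rcases le_or_gt m n with hmn | hmn
    · exact hf hmn
    · have h0 : f n ≡ f m [SMOD (K ^ n • ⊤ : Submodule T T)] := hf hmn.le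
      rw [h, Submodule.bot_smul, SModEq.bot] at h0
      rw [← h0]


/-- Let `(f_m : T → R)` be an `A`-compatible sequence with limit
`F : T̂ → R̂`.  Then `F` is the 0-map iff `f_k(T) ⊆ R^{p^{k+1}}` for all `k`.  Here `A` is a
commutative algebraic group over a perfect field `C` of characteristic `p > 0`; the
completion `T̂` of `T = O_{A,0}` is the complete Hopf algebra `H` (with its group structure
`add`/`neg` on points, identity the counit `ε`), `S = R̂` is the completion of the Noetherian
local `C`-algebra `R` (with residue field `C`, Frobenius injective), realized as the
subalgebra `R₀ ⊆ S` satisfying `R₀ ∩ S^{p^k} = R₀^{p^k}`, the sequence takes values in `R₀`,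
and `G = lim f_m`.  The 0-map is the composition of the residue map with the structure map,
i.e. the map with image `C`. -/
theorem stmt15
    (C : Type u) [Field C] (p : ℕ) [Fact p.Prime] [CharP C p] [PerfectRing C p]
    (H : Type u) [CommRing H] [Algebra C H] [IsLocalRing H] [IsNoetherianRing H]
    [IsAdicComplete (maximalIdeal H) H]
    (hresH : Function.Bijective (algebraMap C (ResidueField H)))
    (S : Type u) [CommRing S] [Algebra C S] [IsLocalRing S] [IsNoetherianRing S]
    [IsAdicComplete (maximalIdeal S) S] [ExpChar S p]
    (hresS : Function.Bijective (algebraMap C (ResidueField S)))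
    -- the counit of `H` (the residue map)
    (ε : H →ₐ[C] C) (hε : ∀ h ∈ maximalIdeal H, ε h = 0)
    -- the group structure on points of the complete Hopf algebra `H`
    (add : ∀ (T : Type u) [CommRing T] [IsLocalRing T] [Algebra C T] [IsNoetherianRing T]
      [IsAdicComplete (maximalIdeal T) T],
      (H →ₐ[C] T) → (H →ₐ[C] T) → (H →ₐ[C] T))
    (neg : ∀ (T : Type u) [CommRing T] [IsLocalRing T] [Algebra C T] [IsNoetherianRing T]
      [IsAdicComplete (maximalIdeal T) T],
      (H →ₐ[C] T) → (H →ₐ[C] T))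
    (hcomm : ∀ (T : Type u) [CommRing T] [IsLocalRing T] [Algebra C T] [IsNoetherianRing T]
      [IsAdicComplete (maximalIdeal T) T] (F G : H →ₐ[C] T), add T F G = add T G F)
    (hassoc : ∀ (T : Type u) [CommRing T] [IsLocalRing T] [Algebra C T] [IsNoetherianRing T]
      [IsAdicComplete (maximalIdeal T) T] (F G K : H →ₐ[C] T),
      add T (add T F G) K = add T F (add T G K))
    (hzero : ∀ (T : Type u) [CommRing T] [IsLocalRing T] [Algebra C T] [IsNoetherianRing T]
      [IsAdicComplete (maximalIdeal T) T] (F : H →ₐ[C] T),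
      add T F ((Algebra.ofId C T).comp ε) = F)
    (hneg : ∀ (T : Type u) [CommRing T] [IsLocalRing T] [Algebra C T] [IsNoetherianRing T]
      [IsAdicComplete (maximalIdeal T) T] (F : H →ₐ[C] T),
      add T F (neg T F) = (Algebra.ofId C T).comp ε)
    (hnat : ∀ (T T' : Type u) [CommRing T] [IsLocalRing T] [Algebra C T] [IsNoetherianRing T]
      [IsAdicComplete (maximalIdeal T) T] [CommRing T'] [IsLocalRing T'] [Algebra C T']
      [IsNoetherianRing T'] [IsAdicComplete (maximalIdeal T') T']
      (φ : T →ₐ[C] T') (F G : H →ₐ[C] T),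
      φ.comp (add T F G) = add T' (φ.comp F) (φ.comp G))
    (hnegnat : ∀ (T T' : Type u) [CommRing T] [IsLocalRing T] [Algebra C T]
      [IsNoetherianRing T] [IsAdicComplete (maximalIdeal T) T] [CommRing T'] [IsLocalRing T']
      [Algebra C T'] [IsNoetherianRing T'] [IsAdicComplete (maximalIdeal T') T']
      (φ : T →ₐ[C] T') (F : H →ₐ[C] T), φ.comp (neg T F) = neg T' (φ.comp F))
    -- Frobenius is injective on `S = R̂`
    (hFrob : Function.Injective (fun s : S => s ^ p))
    -- `R₀` is (the image in `S = R̂` of) the ring `R`, so that `R₀ ∩ S^{p^k} = R₀^{p^k}`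
    (R₀ : Subalgebra C S)
    (hR₀ : ∀ (k : ℕ) (x : S), x ∈ R₀ → (∃ s : S, x = s ^ p ^ k) →
      ∃ r ∈ R₀, x = r ^ p ^ k)
    -- the `A`-compatible sequence, with values in `R₀`
    (F : ℕ → (H →ₐ[C] S))
    (hFR₀ : ∀ (m : ℕ) (h : H), F m h ∈ R₀)
    (hFloc : ∀ (m : ℕ), ∀ h ∈ maximalIdeal H, F m h ∈ maximalIdeal S)
    (hcompat : ∀ (m : ℕ) (h : H), ∃ s : S,
      (add S (F (m + 1)) (neg S (F m))) h = s ^ p ^ (m + 1))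
    -- the limit `G` of the sequence
    (G : H →ₐ[C] S)
    (hlim : ∀ (m : ℕ) (h : H), G h - F m h ∈
      Ideal.span ((fun s : S => s ^ p ^ m) '' (maximalIdeal S : Set S))) :
    -- `G` is the 0-map iff each `f_k` takes values in `p^{k+1}`-th powers (of `R₀`)
    (∀ h : H, G h ∈ Set.range (algebraMap C S)) ↔
      ∀ (k : ℕ) (h : H), ∃ r ∈ R₀, F k h = r ^ p ^ (k + 1) := by
  have hp1 : 1 < p := (Fact.out : p.Prime).one_lt
  have hp0 : p ≠ 0 := (Fact.out : p.Prime).pos.ne'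
  have hppow0 : ∀ n : ℕ, p ^ n ≠ 0 := fun n => pow_ne_zero n hp0
  -- the kernel of ε is inside the maximal ideal
  have hkerε : ∀ h : H, h - algebraMap C H (ε h) ∈ maximalIdeal H := by
    intro h
    have h0 : ε (h - algebraMap C H (ε h)) = 0 := by
      rw [map_sub, AlgHom.commutes]
      simp
    rw [IsLocalRing.mem_maximalIdeal, mem_nonunits_iff]
    intro hu
    have h1 : IsUnit (ε (h - algebraMap C H (ε h))) := hu.map ε
    rw [h0] at h1
    exact h1.ne_zero rfl
  -- roots of elements of the maximal ideal are in the maximal ideal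
  have hrootm : ∀ (s : S) (n : ℕ), n ≠ 0 → s ^ n ∈ maximalIdeal S → s ∈ maximalIdeal S := by
    intro s n hn hs
    rw [IsLocalRing.mem_maximalIdeal, mem_nonunits_iff] at hs ⊢
    exact fun hu => hs (hu.pow n)
  -- algebra maps H → S send the maximal ideal into the maximal ideal
  have MAX : ∀ (ψ : H →ₐ[C] S) (h : H), h ∈ maximalIdeal H → ψ h ∈ maximalIdeal S := by
    intro ψ h hh
    have hres : ∀ c : C, residue S (algebraMap C S c) = algebraMap C (ResidueField S) c :=
      fun c => rfl
    set χ : H →+* ResidueField S := (residue S).comp (ψ : H →+* S) with hχ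
    have hsurj : Function.Surjective χ := by
      intro y
      obtain ⟨c, hc⟩ := hresS.2 y
      refine ⟨algebraMap C H c, ?_⟩
      show residue S (ψ (algebraMap C H c)) = y
      rw [ψ.commutes, hres, hc]
    haveI hm : (RingHom.ker χ).IsMaximal := RingHom.ker_isMaximal_of_surjective χ hsurj
    have heq : RingHom.ker χ = maximalIdeal H := IsLocalRing.eq_maximalIdeal hm
    have hker : h ∈ RingHom.ker χ := heq ▸ hh
    have h0 : residue S (ψ h) = 0 := RingHom.mem_ker.mp hker
    exact (IsLocalRing.residue_eq_zero_iff _).mp h0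
  -- span of p^m-th powers of the maximal ideal is inside m^(p^m)
  have hJm : ∀ (m : ℕ) (x : S),
      x ∈ Ideal.span ((fun s : S => s ^ p ^ m) '' (maximalIdeal S : Set S)) →
      x ∈ (maximalIdeal S) ^ (p ^ m) := by
    intro m x hx
    refine Ideal.span_le.mpr ?_ hx
    rintro y ⟨z, hz, rfl⟩
    exact Ideal.pow_mem_pow hz _
  have hGF : ∀ (m : ℕ) (h : H), G h - F m h ∈ (maximalIdeal S) ^ (p ^ m) :=
    fun m h => hJm m _ (hlim m h)
  -- iterated Frobenius is injective on S
  have PI : ∀ e : ℕ, Function.Injective (fun s : S => s ^ p ^ e) := by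
    intro e
    induction e with
    | zero =>
      intro a b hab
      simpa using hab
    | succ e ih =>
      intro a b hab
      have hab' : (a ^ p ^ e) ^ p = (b ^ p ^ e) ^ p := by
        rw [← pow_mul, ← pow_mul, ← pow_succ]
        exact hab
      exact ih (hFrob hab')
  -- group-theoretic lemmas
  have L3 : ∀ (T : Type u) [CommRing T] [IsLocalRing T] [Algebra C T] [IsNoetherianRing T]
      [IsAdicComplete (maximalIdeal T) T] (X Y : H →ₐ[C] T),
      add T X Y = (Algebra.ofId C T).comp ε → Y = neg T X := by
    intro T _ _ _ _ _ X Y hXY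
    calc Y = add T Y ((Algebra.ofId C T).comp ε) := (hzero T Y).symm
    _ = add T Y (add T X (neg T X)) := by rw [hneg T X]
    _ = add T (add T Y X) (neg T X) := (hassoc T Y X (neg T X)).symm
    _ = add T (add T X Y) (neg T X) := by rw [hcomm T Y X]
    _ = add T ((Algebra.ofId C T).comp ε) (neg T X) := by rw [hXY]
    _ = add T (neg T X) ((Algebra.ofId C T).comp ε) := hcomm T _ _
    _ = neg T X := hzero T _
  have L1 : ∀ (T : Type u) [CommRing T] [IsLocalRing T] [Algebra C T] [IsNoetherianRing T]
      [IsAdicComplete (maximalIdeal T) T] (X : H →ₐ[C] T),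
      add T ((Algebra.ofId C T).comp ε) X = X := by
    intro T _ _ _ _ _ X
    rw [hcomm]
    exact hzero T X
  have L4 : ∀ (T : Type u) [CommRing T] [IsLocalRing T] [Algebra C T] [IsNoetherianRing T]
      [IsAdicComplete (maximalIdeal T) T],
      neg T ((Algebra.ofId C T).comp ε) = (Algebra.ofId C T).comp ε := by
    intro T _ _ _ _ _
    exact (L3 T _ _ (hzero T _)).symm
  have L5 : ∀ (T : Type u) [CommRing T] [IsLocalRing T] [Algebra C T] [IsNoetherianRing T]
      [IsAdicComplete (maximalIdeal T) T] (X Y : H →ₐ[C] T),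
      neg T (add T X Y) = add T (neg T X) (neg T Y) := by
    intro T _ _ _ _ _ X Y
    refine (L3 T (add T X Y) (add T (neg T X) (neg T Y)) ?_).symm
    calc add T (add T X Y) (add T (neg T X) (neg T Y))
        = add T (add T (add T X Y) (neg T X)) (neg T Y) := (hassoc T _ _ _).symm
      _ = add T (add T (neg T X) (add T X Y)) (neg T Y) := by
          rw [hcomm T (add T X Y) (neg T X)]
      _ = add T (add T (add T (neg T X) X) Y) (neg T Y) := by
          rw [hassoc T (neg T X) X Y]
      _ = add T (add T (add T X (neg T X)) Y) (neg T Y) := by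
          rw [hcomm T (neg T X) X]
      _ = add T (add T ((Algebra.ofId C T).comp ε) Y) (neg T Y) := by rw [hneg T X]
      _ = add T Y (neg T Y) := by rw [L1 T Y]
      _ = (Algebra.ofId C T).comp ε := hneg T Y
  have L6 : ∀ (T : Type u) [CommRing T] [IsLocalRing T] [Algebra C T] [IsNoetherianRing T]
      [IsAdicComplete (maximalIdeal T) T] (X : H →ₐ[C] T),
      neg T (neg T X) = X := by
    intro T _ _ _ _ _ X
    refine (L3 T (neg T X) X ?_).symm
    rw [hcomm]
    exact hneg T X
  have L9 : ∀ (T : Type u) [CommRing T] [IsLocalRing T] [Algebra C T] [IsNoetherianRing T]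
      [IsAdicComplete (maximalIdeal T) T] (A B D : H →ₐ[C] T),
      add T (add T A (neg T B)) (neg T (add T D (neg T B))) = add T A (neg T D) := by
    intro T _ _ _ _ _ A B D
    rw [L5 T D (neg T B), L6 T B]
    calc add T (add T A (neg T B)) (add T (neg T D) B)
        = add T A (add T (neg T B) (add T (neg T D) B)) := hassoc T _ _ _
      _ = add T A (add T (add T (neg T D) B) (neg T B)) := by
          rw [hcomm T (neg T B) (add T (neg T D) B)]
      _ = add T A (add T (neg T D) (add T B (neg T B))) := by
          rw [hassoc T (neg T D) B (neg T B)]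
      _ = add T A (add T (neg T D) ((Algebra.ofId C T).comp ε)) := by rw [hneg T B]
      _ = add T A (neg T D) := by rw [hzero T (neg T D)]
  -- continuity of the group law modulo powers of the maximal ideal
  have CONT : ∀ (T : Type u) [CommRing T] [IsLocalRing T] [Algebra C T] [IsNoetherianRing T]
      [IsAdicComplete (maximalIdeal T) T] (n : ℕ), n ≠ 0 → ∀ (A B X : H →ₐ[C] T),
      (∀ h, A h - B h ∈ maximalIdeal T ^ n) →
      ((∀ h, (add T A X) h - (add T B X) h ∈ maximalIdeal T ^ n) ∧
        (∀ h, (neg T A) h - (neg T B) h ∈ maximalIdeal T ^ n)) := by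
    intro T _ _ _ _ _ n hn A B X hAB
    have hle : (maximalIdeal T ^ n : Ideal T) ≤ maximalIdeal T := Ideal.pow_le_self hn
    have htop : (maximalIdeal T ^ n : Ideal T) ≠ ⊤ := by
      intro hcon
      exact (IsLocalRing.maximalIdeal.isMaximal T).ne_top (top_le_iff.mp (hcon ▸ hle))
    haveI := quotLocal (T := T) htop
    haveI : IsAdicComplete (maximalIdeal (T ⧸ maximalIdeal T ^ n)) (T ⧸ maximalIdeal T ^ n) := by
      apply adicCompleteOfNilpotent (n := n)
      rw [quotMax hle, ← Ideal.map_pow, Ideal.map_quotient_self]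
    have hπab : (Ideal.Quotient.mkₐ C (maximalIdeal T ^ n)).comp A
        = (Ideal.Quotient.mkₐ C (maximalIdeal T ^ n)).comp B := by
      ext h
      show Ideal.Quotient.mk (maximalIdeal T ^ n) (A h)
          = Ideal.Quotient.mk (maximalIdeal T ^ n) (B h)
      rw [Ideal.Quotient.eq]
      exact hAB h
    constructor
    · intro h
      have e1 : (Ideal.Quotient.mkₐ C (maximalIdeal T ^ n)).comp (add T A X)
          = (Ideal.Quotient.mkₐ C (maximalIdeal T ^ n)).comp (add T B X) := by
        rw [hnat T _ (Ideal.Quotient.mkₐ C (maximalIdeal T ^ n)) A X,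
          hnat T _ (Ideal.Quotient.mkₐ C (maximalIdeal T ^ n)) B X, hπab]
      have e2 := AlgHom.congr_fun e1 h
      exact (Ideal.Quotient.eq).mp e2
    · intro h
      have e1 : (Ideal.Quotient.mkₐ C (maximalIdeal T ^ n)).comp (neg T A)
          = (Ideal.Quotient.mkₐ C (maximalIdeal T ^ n)).comp (neg T B) := by
        rw [hnegnat T _ (Ideal.Quotient.mkₐ C (maximalIdeal T ^ n)) A,
          hnegnat T _ (Ideal.Quotient.mkₐ C (maximalIdeal T ^ n)) B, hπab]
      have e2 := AlgHom.congr_fun e1 h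
      exact (Ideal.Quotient.eq).mp e2
  -- the zero map pointwise
  have hZ : ∀ (T : Type u) [CommRing T] [IsLocalRing T] [Algebra C T] [IsNoetherianRing T]
      [IsAdicComplete (maximalIdeal T) T] (h : H),
      ((Algebra.ofId C T).comp ε) h = algebraMap C T (ε h) := by
    intro T _ _ _ _ _ h
    simp [Algebra.ofId_apply]
  have hmono : ∀ i : ℕ, i ≤ p ^ i := fun i => (Nat.lt_pow_self (n := i) hp1).le
  constructor
  · -- forward direction
    intro hG k h'
    -- G is the zero map
    have claimG : ∀ h : H, G h = algebraMap C S (ε h) := by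
      intro h
      have hh₀ : h - algebraMap C H (ε h) ∈ maximalIdeal H := hkerε h
      have hd : G h - algebraMap C S (ε h) = G (h - algebraMap C H (ε h)) := by
        rw [map_sub, AlgHom.commutes]
      have hzero' : G (h - algebraMap C H (ε h)) = 0 := by
        obtain ⟨c, hc⟩ := hG (h - algebraMap C H (ε h))
        have hm : G (h - algebraMap C H (ε h)) ∈ maximalIdeal S := by
          have h1 := hGF 0 (h - algebraMap C H (ε h))
          have h2 : F 0 (h - algebraMap C H (ε h)) ∈ maximalIdeal S := hFloc 0 _ hh₀
          have h1' : G (h - algebraMap C H (ε h)) - F 0 (h - algebraMap C H (ε h))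
              ∈ maximalIdeal S := by simpa using h1
          have h4 := add_mem h1' h2
          rwa [sub_add_cancel] at h4
        have h4 : residue S (G (h - algebraMap C H (ε h))) = 0 :=
          (IsLocalRing.residue_eq_zero_iff _).mpr hm
        have h5 : algebraMap C (ResidueField S) c = 0 := by
          have h6 : residue S (algebraMap C S c) = algebraMap C (ResidueField S) c := rfl
          rw [← h6, hc, h4]
        have h7 : c = 0 := hresS.1 (by rw [h5, map_zero])
        rw [← hc, h7, map_zero]
      have h8 : G h - algebraMap C S (ε h) = 0 := hd.trans hzero'
      exact sub_eq_zero.mp h8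
    -- the root homs D m of the successive differences
    have hDex : ∀ m : ℕ, ∃ Dm : H →ₐ[C] Tw S p (k+1),
        (twHom C S p (k+1)).comp Dm = add S (F (k+m+1)) (neg S (F (k+m))) := by
      intro m
      have hex : ∀ h : H, ∃ t : S,
          (add S (F (k+m+1)) (neg S (F (k+m)))) h = t ^ p ^ (k+1) := by
        intro h
        obtain ⟨s, hs⟩ := hcompat (k+m) h
        refine ⟨s ^ p ^ m, ?_⟩
        rw [hs, ← pow_mul, ← pow_add, show m + (k+1) = k + m + 1 by omega]
      choose rt hrt using hex
      refine ⟨{ toFun := rt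
                map_one' := by
                  apply PI (k+1)
                  show rt 1 ^ p ^ (k+1) = (1 : S) ^ p ^ (k+1)
                  rw [← hrt, map_one, one_pow]
                map_mul' := by
                  intro a b
                  apply PI (k+1)
                  show rt (a * b) ^ p ^ (k+1) = (rt a * rt b) ^ p ^ (k+1)
                  rw [mul_pow, ← hrt, ← hrt, ← hrt, map_mul]
                map_zero' := by
                  apply PI (k+1)
                  show rt 0 ^ p ^ (k+1) = (0 : S) ^ p ^ (k+1)
                  rw [← hrt, map_zero, zero_pow (hppow0 _)]
                map_add' := by
                  intro a b
                  apply PI (k+1)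
                  show rt (a + b) ^ p ^ (k+1) = (rt a + rt b) ^ p ^ (k+1)
                  rw [add_pow_expChar_pow, ← hrt, ← hrt, ← hrt, map_add]
                commutes' := by
                  intro c
                  apply PI (k+1)
                  show rt (algebraMap C H c) ^ p ^ (k+1)
                      = (algebraMap C S ((iterateFrobeniusEquiv C p (k+1)).symm c)) ^ p ^ (k+1)
                  rw [← hrt, AlgHom.commutes, ← map_pow, ← iterateFrobeniusEquiv_def,
                    RingEquiv.apply_symm_apply] }, ?_⟩
      ext h
      show (rt h) ^ p ^ (k+1) = (add S (F (k+m+1)) (neg S (F (k+m)))) h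
      exact (hrt h).symm
    choose D hD using hDex
    -- define V by recursion
    let V : ℕ → (H →ₐ[C] Tw S p (k+1)) := fun m =>
      Nat.rec ((Algebra.ofId C (Tw S p (k+1))).comp ε)
        (fun m Vm => add (Tw S p (k+1)) Vm (neg (Tw S p (k+1)) (D m))) m
    have hV0 : V 0 = (Algebra.ofId C (Tw S p (k+1))).comp ε := rfl
    have hVs : ∀ m, V (m+1) = add (Tw S p (k+1)) (V m) (neg (Tw S p (k+1)) (D m)) :=
      fun m => rfl
    -- twHom ∘ V m = F k ⊖ F (k+m)
    have hE : ∀ m, (twHom C S p (k+1)).comp (V m) = add S (F k) (neg S (F (k+m))) := by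
      intro m
      induction m with
      | zero =>
        have hb : (twHom C S p (k+1)).comp (V 0) = (Algebra.ofId C S).comp ε := by
          rw [hV0]
          ext h
          show twHom C S p (k+1) (algebraMap C (Tw S p (k+1)) (ε h)) = algebraMap C S (ε h)
          exact (twHom C S p (k+1)).commutes (ε h)
        rw [hb]
        exact (hneg S (F k)).symm
      | succ m ih =>
        calc (twHom C S p (k+1)).comp (V (m+1))
            = add S ((twHom C S p (k+1)).comp (V m))
              ((twHom C S p (k+1)).comp (neg (Tw S p (k+1)) (D m))) := by
              rw [hVs m]
              exact hnat _ _ _ _ _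
          _ = add S (add S (F k) (neg S (F (k+m))))
              (neg S (add S (F (k+m+1)) (neg S (F (k+m))))) := by
              rw [hnegnat, hD m, ih]
          _ = add S (F k) (neg S (F (k+m+1))) := L9 S _ _ _
    have twmem : ∀ (n : ℕ) (x : S),
        x ∈ (maximalIdeal (Tw S p (k+1)) ^ n : Ideal (Tw S p (k+1)))
          ↔ x ∈ (maximalIdeal S ^ n : Ideal S) := fun n x => Iff.rfl
    have hDcong : ∀ (m : ℕ) (h : H),
        D m h - ((Algebra.ofId C (Tw S p (k+1))).comp ε) h
          ∈ (maximalIdeal (Tw S p (k+1)) ^ (p ^ m) : Ideal (Tw S p (k+1))) := by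
      intro m h
      have hh₀ : h - algebraMap C H (ε h) ∈ maximalIdeal H := hkerε h
      have hd : D m h - ((Algebra.ofId C (Tw S p (k+1))).comp ε) h
          = D m (h - algebraMap C H (ε h)) := by
        rw [hZ (Tw S p (k+1)) h, map_sub, AlgHom.commutes]
      rw [hd]
      obtain ⟨s, hs⟩ := hcompat (k+m) (h - algebraMap C H (ε h))
      have hsm : s ∈ maximalIdeal S :=
        hrootm s _ (hppow0 _) (hs ▸ MAX _ _ hh₀)
      have key : D m (h - algebraMap C H (ε h)) = s ^ p ^ m := by
        apply PI (k+1)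
        show (D m (h - algebraMap C H (ε h))) ^ p ^ (k+1) = (s ^ p ^ m) ^ p ^ (k+1)
        calc (show S from D m (h - algebraMap C H (ε h))) ^ p ^ (k+1)
            = (twHom C S p (k+1)).comp (D m) (h - algebraMap C H (ε h)) := rfl
          _ = (add S (F (k+m+1)) (neg S (F (k+m)))) (h - algebraMap C H (ε h)) := by
              rw [hD m]
          _ = s ^ p ^ (k+m+1) := hs
          _ = (s ^ p ^ m) ^ p ^ (k+1) := by
              rw [← pow_mul, ← pow_add, show m + (k+1) = k + m + 1 by omega]
      rw [key]
      exact (twmem _ _).mpr (Ideal.pow_mem_pow hsm _)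
    have hVcont : ∀ (m : ℕ) (h : H),
        V (m+1) h - V m h
          ∈ (maximalIdeal (Tw S p (k+1)) ^ (p ^ m) : Ideal (Tw S p (k+1))) := by
      intro m
      obtain ⟨-, hn1⟩ := CONT (Tw S p (k+1)) (p ^ m) (hppow0 m) (D m)
        ((Algebra.ofId C (Tw S p (k+1))).comp ε) (V m) (hDcong m)
      have hn2 : ∀ h, neg (Tw S p (k+1)) (D m) h
          - (neg (Tw S p (k+1)) ((Algebra.ofId C (Tw S p (k+1))).comp ε)) h
          ∈ (maximalIdeal (Tw S p (k+1)) ^ (p ^ m) : Ideal (Tw S p (k+1))) := hn1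
      rw [L4 (Tw S p (k+1))] at hn2
      obtain ⟨ha1, -⟩ := CONT (Tw S p (k+1)) (p ^ m) (hppow0 m) (neg (Tw S p (k+1)) (D m))
        ((Algebra.ofId C (Tw S p (k+1))).comp ε) (V m) hn2
      intro h
      have hfin := ha1 h
      rwa [hcomm (Tw S p (k+1)) (neg (Tw S p (k+1)) (D m)) (V m), ← hVs m,
        L1 (Tw S p (k+1)) (V m)] at hfin
    have claim1 : ∀ (m : ℕ) (h : H),
        F k h - (twHom C S p (k+1)).comp (V m) h ∈ (maximalIdeal S) ^ (p ^ (k+m)) := by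
      intro m
      have hFZ : ∀ h, F (k+m) h - ((Algebra.ofId C S).comp ε) h
          ∈ (maximalIdeal S) ^ (p ^ (k+m)) := by
        intro h
        have h1 := hGF (k+m) h
        rw [hZ S h, ← claimG h, ← neg_sub]
        exact neg_mem h1
      obtain ⟨-, hneg1⟩ := CONT S (p ^ (k+m)) (hppow0 _) (F (k+m))
        ((Algebra.ofId C S).comp ε) (F k) hFZ
      rw [L4 S] at hneg1
      obtain ⟨hadd1, -⟩ := CONT S (p ^ (k+m)) (hppow0 _) (neg S (F (k+m)))
        ((Algebra.ofId C S).comp ε) (F k) hneg1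
      intro h
      have hfin := hadd1 h
      rw [hcomm S (neg S (F (k+m))) (F k), ← hE m, L1 S (F k)] at hfin
      rw [← neg_sub]
      exact neg_mem hfin
    -- now pass to the limit
    let f : ℕ → S := fun i => (V i h' : S)
    have hstep : ∀ i j : ℕ, i ≤ j → f j - f i ∈ (maximalIdeal S) ^ (p ^ i) := by
      intro i j
      induction j with
      | zero =>
        intro hij
        have hi0 : i = 0 := Nat.le_zero.mp hij
        subst hi0
        simpa using zero_mem ((maximalIdeal S) ^ (p ^ 0))
      | succ j ih =>
        intro hij
        rcases Nat.eq_or_lt_of_le hij with heq | hlt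
        · subst heq
          simpa using zero_mem ((maximalIdeal S) ^ (p ^ i))
        · have hij' : i ≤ j := Nat.lt_succ_iff.mp hlt
          have h1 : f (j+1) - f j ∈ (maximalIdeal S) ^ (p ^ i) := by
            have h2 := (twmem _ _).mp (hVcont j h')
            exact Ideal.pow_le_pow_right
              (Nat.pow_le_pow_right (Fact.out : p.Prime).pos hij') h2
          have h2 := ih hij'
          have h3 := add_mem h1 h2
          rwa [sub_add_sub_cancel] at h3
    have hsmul : ∀ (n : ℕ), (maximalIdeal S ^ n • ⊤ : Ideal S) = maximalIdeal S ^ n := by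
      intro n
      rw [smul_eq_mul, Ideal.mul_top]
    have hcauchy : ∀ {i j : ℕ}, i ≤ j →
        f i ≡ f j [SMOD (maximalIdeal S ^ i • ⊤ : Ideal S)] := by
      intro i j hij
      rw [hsmul i]
      refine (Submodule.Quotient.eq _).mpr ?_
      have h1 := hstep i j hij
      have h2 : f i - f j ∈ (maximalIdeal S) ^ (p ^ i) := by
        rw [← neg_sub]
        exact neg_mem h1
      exact Ideal.pow_le_pow_right (hmono i) h2
    obtain ⟨L, hL⟩ := (IsAdicComplete.toIsPrecomplete : IsPrecomplete (maximalIdeal S) S).prec hcauchy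
    have hLdiff : ∀ i : ℕ, f i - L ∈ (maximalIdeal S) ^ i := by
      intro i
      have h1 := hL i
      rw [hsmul i] at h1
      exact (Submodule.Quotient.eq _).mp h1
    have hfin : ∀ i : ℕ, F k h' - L ^ p ^ (k+1) ∈ (maximalIdeal S) ^ i := by
      intro i
      have h1 := claim1 i h'
      have e1 : (twHom C S p (k+1)).comp (V i) h' = f i ^ p ^ (k+1) := rfl
      rw [e1] at h1
      have h2 : f i ^ p ^ (k+1) - L ^ p ^ (k+1) ∈ (maximalIdeal S) ^ i := by
        rw [← sub_pow_expChar_pow]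
        exact Ideal.pow_le_self (hppow0 _) (Ideal.pow_mem_pow (hLdiff i) _)
      have h3 : F k h' - f i ^ p ^ (k+1) ∈ (maximalIdeal S) ^ i := by
        refine Ideal.pow_le_pow_right ?_ h1
        calc i ≤ p ^ i := hmono i
        _ ≤ p ^ (k+i) := Nat.pow_le_pow_right (Fact.out : p.Prime).pos (by omega)
      have h4 := add_mem h3 h2
      rwa [sub_add_sub_cancel] at h4
    have hz : F k h' - L ^ p ^ (k+1) = 0 := by
      refine (IsAdicComplete.toIsHausdorff : IsHausdorff (maximalIdeal S) S).haus _ fun n => ?_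
      rw [SModEq.zero, hsmul n]
      exact hfin n
    exact hR₀ (k+1) (F k h') (hFR₀ k h') ⟨L, sub_eq_zero.mp hz⟩
  · -- reverse direction
    intro hpow h
    have hh₀ : h - algebraMap C H (ε h) ∈ maximalIdeal H := hkerε h
    have hd : G h = algebraMap C S (ε h) + G (h - algebraMap C H (ε h)) := by
      rw [map_sub, AlgHom.commutes]
      ring
    have hzero' : G (h - algebraMap C H (ε h)) = 0 := by
      have hmem : ∀ n : ℕ, G (h - algebraMap C H (ε h)) ∈ (maximalIdeal S) ^ n := by
        intro n
        have h1 := hGF n (h - algebraMap C H (ε h))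
        obtain ⟨r, hr, hre⟩ := hpow n (h - algebraMap C H (ε h))
        have h2 : F n (h - algebraMap C H (ε h)) ∈ maximalIdeal S := hFloc n _ hh₀
        have hrm : r ∈ maximalIdeal S := hrootm r _ (hppow0 _) (hre ▸ h2)
        have h3 : F n (h - algebraMap C H (ε h)) ∈ (maximalIdeal S) ^ (p ^ n) := by
          rw [hre]
          exact Ideal.pow_le_pow_right
            (Nat.pow_le_pow_right (Fact.out : p.Prime).pos (by omega))
            (Ideal.pow_mem_pow hrm _)
        have h4 := add_mem h1 h3
        rw [sub_add_cancel] at h4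
        exact Ideal.pow_le_pow_right (hmono n) h4
      refine (IsAdicComplete.toIsHausdorff : IsHausdorff (maximalIdeal S) S).haus _ fun n => ?_
      rw [SModEq.zero, show (maximalIdeal S ^ n • ⊤ : Ideal S) = maximalIdeal S ^ n from by
        rw [smul_eq_mul, Ideal.mul_top]]
      exact hmem n
    rw [hd, hzero', add_zero]
    exact ⟨ε h, rfl⟩
end

section
/- Let (f_m : T → R) be an A-compatible sequence with limit F : T̂ → R̂. Then for every k, the induced map F_* on differentials agrees with (f_k)_* on the space of invariant differential forms Ω^inv_A of A, viewed inside Ω_{T̂}. -/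
open IsLocalRing

universe u

/-- `φ` is the pushforward map on Kähler differentials induced by the algebra map `f`
(an additive map determined by `φ (a • d h) = f a • d (f h)`). -/
def IsPushforward (C : Type u) [Field C] {H T : Type u} [CommRing H] [Algebra C H]
    [CommRing T] [Algebra C T] (f : H →ₐ[C] T)
    (φ : Ω[H⁄C] →+ Ω[T⁄C]) : Prop :=
  ∀ a h : H, φ (a • KaehlerDifferential.D C H h) = f a • KaehlerDifferential.D C T (f h)

set_option linter.unusedSectionVars false
set_option linter.unusedVariables false
set_option maxHeartbeats 1000000
section A
variable {C : Type u} [Field C] {H S : Type u} [CommRing H] [Algebra C H]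
  [CommRing S] [Algebra C S]

lemma exists_isPushforward (f : H →ₐ[C] S) :
    ∃ φ : Ω[H⁄C] →+ Ω[S⁄C], IsPushforward C f φ := by
  letI : Algebra H S := f.toRingHom.toAlgebra
  haveI : IsScalarTower C H S := IsScalarTower.of_algebraMap_eq fun c => (f.commutes c).symm
  refine ⟨(KaehlerDifferential.map C C H S).toAddMonoidHom, fun a h => ?_⟩
  show KaehlerDifferential.map C C H S (a • KaehlerDifferential.D C H h) = _
  rw [map_smul, KaehlerDifferential.map_D]
  rw [← algebraMap_smul (R := H) S a]
  rfl

lemma IsPushforward.ext {f : H →ₐ[C] S} {φ φ' : Ω[H⁄C] →+ Ω[S⁄C]}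
    (h : IsPushforward C f φ) (h' : IsPushforward C f φ') : φ = φ' := by
  ext ξ
  have key : ∀ ξ ∈ Submodule.span H (Set.range (KaehlerDifferential.D C H)),
      ∀ a : H, φ (a • ξ) = φ' (a • ξ) := by
    intro ξ hξ
    induction hξ using Submodule.span_induction with
    | mem x hx =>
      obtain ⟨h0, rfl⟩ := hx
      intro a; rw [h, h']
    | zero => intro a; rw [smul_zero, map_zero, map_zero]
    | add x y hx' hy' hx hy => intro a; rw [smul_add, map_add, map_add, hx, hy]
    | smul b x hx' hx => intro a; rw [smul_smul]; exact hx _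
  have := key ξ (by rw [KaehlerDifferential.span_range_derivation]; trivial) 1
  simpa using this

lemma IsPushforward.eq_zero {p : ℕ} [Fact p.Prime] [CharP S p] {f : H →ₐ[C] S}
    {φ : Ω[H⁄C] →+ Ω[S⁄C]} (h : IsPushforward C f φ) (e : ℕ) (he : 0 < e)
    (hf : ∀ h : H, ∃ s : S, f h = s ^ p ^ e) (ξ : Ω[H⁄C]) : φ ξ = 0 := by
  have key : ∀ ξ ∈ Submodule.span H (Set.range (KaehlerDifferential.D C H)),
      ∀ a : H, φ (a • ξ) = 0 := by
    intro ξ hξ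
    induction hξ using Submodule.span_induction with
    | mem x hx =>
      obtain ⟨h0, rfl⟩ := hx
      intro a
      rw [h]
      obtain ⟨s, hs⟩ := hf h0
      rw [hs, Derivation.leibniz_pow, ← Nat.cast_smul_eq_nsmul S]
      have : ((p ^ e : ℕ) : S) = 0 := by
        rw [Nat.cast_pow, CharP.cast_eq_zero S p, zero_pow he.ne']
      rw [this, zero_smul, smul_zero]
    | zero => intro a; rw [smul_zero, map_zero]
    | add x y hx' hy' hx hy => intro a; rw [smul_add, map_add, hx, hy, add_zero]
    | smul b x hx' hx => intro a; rw [smul_smul]; exact hx _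
  have := key ξ (by rw [KaehlerDifferential.span_range_derivation]; trivial) 1
  simpa using this

end A

section C
variable {C : Type u} [Field C] {S : Type u} [CommRing S] [Algebra C S]
  [IsLocalRing S] {p : ℕ} [Fact p.Prime] [CharP S p] [CharP C p] [PerfectRing C p]
  {ι : Type u} [Fintype ι] [DecidableEq ι]

lemma padd (E : (ι → Fin p) → ℕ) (K : ℕ) (x : ι → S) {z w : S}
    (hz : ∃ u : (ι → Fin p) → S, (∀ α, u α ∈ maximalIdeal S ^ E α) ∧
      z - ∑ α : ι → Fin p, u α ^ p * ∏ i, x i ^ (α i : ℕ) ∈ maximalIdeal S ^ K)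
    (hw : ∃ u : (ι → Fin p) → S, (∀ α, u α ∈ maximalIdeal S ^ E α) ∧
      w - ∑ α : ι → Fin p, u α ^ p * ∏ i, x i ^ (α i : ℕ) ∈ maximalIdeal S ^ K) :
    ∃ u : (ι → Fin p) → S, (∀ α, u α ∈ maximalIdeal S ^ E α) ∧
      z + w - ∑ α : ι → Fin p, u α ^ p * ∏ i, x i ^ (α i : ℕ) ∈ maximalIdeal S ^ K := by
  obtain ⟨u, hu1, hu2⟩ := hz
  obtain ⟨v, hv1, hv2⟩ := hw
  refine ⟨u + v, fun α => add_mem (hu1 α) (hv1 α), ?_⟩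
  have hsum : ∑ α : ι → Fin p, (u + v) α ^ p * ∏ i, x i ^ (α i : ℕ)
      = ∑ α : ι → Fin p, u α ^ p * ∏ i, x i ^ (α i : ℕ)
        + ∑ α : ι → Fin p, v α ^ p * ∏ i, x i ^ (α i : ℕ) := by
    rw [← Finset.sum_add_distrib]
    refine Finset.sum_congr rfl fun α _ => ?_
    rw [Pi.add_apply, add_pow_char, add_mul]
  rw [hsum, add_sub_add_comm]
  exact add_mem hu2 hv2

lemma pzero (E : (ι → Fin p) → ℕ) (K : ℕ) (x : ι → S) :
    ∃ u : (ι → Fin p) → S, (∀ α, u α ∈ maximalIdeal S ^ E α) ∧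
      (0 : S) - ∑ α : ι → Fin p, u α ^ p * ∏ i, x i ^ (α i : ℕ) ∈ maximalIdeal S ^ K := by
  haveI : NeZero p := ⟨(Fact.out : p.Prime).ne_zero⟩
  refine ⟨0, fun α => zero_mem _, ?_⟩
  simp [zero_pow (NeZero.ne p)]

lemma psum {κ : Type*} (E : (ι → Fin p) → ℕ) (K : ℕ) (x : ι → S) (s : Finset κ) (f : κ → S)
    (h : ∀ j ∈ s, ∃ u : (ι → Fin p) → S, (∀ α, u α ∈ maximalIdeal S ^ E α) ∧
      f j - ∑ α : ι → Fin p, u α ^ p * ∏ i, x i ^ (α i : ℕ) ∈ maximalIdeal S ^ K) :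
    ∃ u : (ι → Fin p) → S, (∀ α, u α ∈ maximalIdeal S ^ E α) ∧
      (∑ j ∈ s, f j) - ∑ α : ι → Fin p, u α ^ p * ∏ i, x i ^ (α i : ℕ) ∈ maximalIdeal S ^ K :=
  Finset.sum_induction f
    (fun z => ∃ u : (ι → Fin p) → S, (∀ α, u α ∈ maximalIdeal S ^ E α) ∧
      z - ∑ α : ι → Fin p, u α ^ p * ∏ i, x i ^ (α i : ℕ) ∈ maximalIdeal S ^ K)
    (fun _ _ ha hb => padd E K x ha hb) (pzero E K x) h

lemma stepA (hres : Function.Surjective (algebraMap C (ResidueField S)))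
    (x : ι → S) (hx : Ideal.span (Set.range x) = maximalIdeal S) :
    ∀ (k : ℕ) (s : S), s ∈ maximalIdeal S ^ k →
    ∃ u : (ι → Fin p) → S,
      (∀ α, u α ∈ maximalIdeal S ^ ((k - ∑ i, (α i : ℕ)) / p)) ∧
      s - ∑ α : ι → Fin p, u α ^ p * ∏ i, x i ^ (α i : ℕ) ∈ maximalIdeal S ^ (k + 1) := by
  haveI : NeZero p := ⟨(Fact.out : p.Prime).ne_zero⟩
  have hp2 : 2 ≤ p := (Fact.out : p.Prime).two_le
  have hp0 : 0 < p := by omega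
  have hxi : ∀ i, x i ∈ maximalIdeal S := fun i =>
    hx ▸ Ideal.subset_span (Set.mem_range_self i)
  intro k
  induction k with
  | zero =>
    intro s _
    obtain ⟨c, hc⟩ := hres (residue S s)
    set c' : C := (frobeniusEquiv C p).symm c with hc'
    have hcp : c' ^ p = c := by
      have := (frobeniusEquiv C p).apply_symm_apply c
      rwa [frobeniusEquiv_def] at this
    refine ⟨fun α => if α = 0 then algebraMap C S c' else 0, fun α => by simp, ?_⟩
    have hsum : ∑ α : ι → Fin p, ((if α = (0 : ι → Fin p) then algebraMap C S c' else 0) ^ p *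
        ∏ i, x i ^ (α i : ℕ)) = algebraMap C S c := by
      rw [Finset.sum_eq_single (0 : ι → Fin p)]
      · rw [if_pos rfl, ← map_pow, hcp]
        have h0 : ∀ i : ι, ((0 : ι → Fin p) i : ℕ) = 0 := fun i => rfl
        simp [h0]
      · intro β _ hβ
        rw [if_neg hβ, zero_pow (NeZero.ne p), zero_mul]
      · intro h; exact absurd (Finset.mem_univ _) h
    rw [hsum, zero_add, pow_one, ← residue_eq_zero_iff, map_sub,
      show residue S (algebraMap C S c) = algebraMap C (ResidueField S) c from rfl, hc, sub_self]
  | succ k ih =>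
    intro s hs
    rw [pow_succ] at hs
    refine Submodule.mul_induction_on hs ?_ ?_
    swap
    · exact fun z w hz hw => padd _ _ _ hz hw
    intro a ha b hb
    rw [← hx, Ideal.span, Submodule.mem_span_range_iff_exists_fun] at hb
    obtain ⟨t, ht⟩ := hb
    have hab : a * b = ∑ i, (a * t i) * x i := by
      rw [← ht, Finset.mul_sum]
      exact Finset.sum_congr rfl fun i _ => by rw [smul_eq_mul]; ring
    rw [hab]
    refine psum _ _ _ _ _ ?_
    intro i _
    obtain ⟨u, hub, hur⟩ := ih (a * t i) (Ideal.mul_mem_right _ _ ha)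
    set e : (ι → Fin p) ≃ (ι → Fin p) :=
      { toFun := fun α => Function.update α i (α i + 1)
        invFun := fun α => Function.update α i (α i - 1)
        left_inv := fun α => by
          simp only [Function.update_self, Function.update_idem, add_sub_cancel_right,
            Function.update_eq_self]
        right_inv := fun α => by
          simp only [Function.update_self, Function.update_idem, sub_add_cancel,
            Function.update_eq_self] } with he
    have heapp : ∀ α : ι → Fin p, e α = Function.update α i (α i + 1) := fun _ => rfl
    have heval : ∀ α : ι → Fin p, (e α) i = α i + 1 := fun α => Function.update_self _ _ _
    have hva : ∀ v : Fin p, ((v + 1 : Fin p) : ℕ) = ((v : ℕ) + 1) % p := by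
      intro v
      rw [Fin.val_add, Fin.val_one', Nat.mod_eq_of_lt (show (1:ℕ) < p by omega)]
    have hmono : ∀ (α : ι → Fin p) (w : Fin p),
        (∏ j, x j ^ ((Function.update α i w) j : ℕ)) =
          x i ^ (w : ℕ) * ∏ j ∈ Finset.univ.erase i, x j ^ (α j : ℕ) := by
      intro α w
      rw [← Finset.mul_prod_erase Finset.univ _ (Finset.mem_univ i), Function.update_self]
      congr 1
      exact Finset.prod_congr rfl fun j hj => by
        rw [Function.update_of_ne (Finset.ne_of_mem_erase hj)]
    have hmono' : ∀ α : ι → Fin p, ∏ j, x j ^ (α j : ℕ) =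
        x i ^ (α i : ℕ) * ∏ j ∈ Finset.univ.erase i, x j ^ (α j : ℕ) :=
      fun α => (Finset.mul_prod_erase Finset.univ _ (Finset.mem_univ i)).symm
    have hdeg : ∀ (α : ι → Fin p) (w : Fin p),
        (∑ j, ((Function.update α i w) j : ℕ)) =
          (w : ℕ) + ∑ j ∈ Finset.univ.erase i, (α j : ℕ) := by
      intro α w
      rw [← Finset.add_sum_erase Finset.univ _ (Finset.mem_univ i), Function.update_self]
      congr 1
      exact Finset.sum_congr rfl fun j hj => by
        rw [Function.update_of_ne (Finset.ne_of_mem_erase hj)]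
    have hdeg' : ∀ α : ι → Fin p, ∑ j, (α j : ℕ) =
        (α i : ℕ) + ∑ j ∈ Finset.univ.erase i, (α j : ℕ) :=
      fun α => (Finset.add_sum_erase Finset.univ _ (Finset.mem_univ i)).symm
    set u' : (ι → Fin p) → S := fun β => if β i = 0 then u (e.symm β) * x i else u (e.symm β)
      with hu'
    have hcase : ∀ α : ι → Fin p, ((α i : ℕ) = p - 1 ∧ (e α) i = 0 ∧ u' (e α) = u α * x i)
        ∨ ((α i : ℕ) < p - 1 ∧ ((e α) i : ℕ) = (α i : ℕ) + 1 ∧ u' (e α) = u α) := by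
      intro α
      by_cases hcc : (α i : ℕ) = p - 1
      · left
        have h0 : (e α) i = 0 := by
          apply Fin.ext
          rw [heval, hva, hcc, Fin.val_zero]
          have hpp : p - 1 + 1 = p := by omega
          rw [hpp, Nat.mod_self]
        refine ⟨hcc, h0, ?_⟩
        rw [hu']
        simp [e.symm_apply_apply, h0]
      · right
        have hlt : (α i : ℕ) < p - 1 := lt_of_le_of_ne (by have := (α i).isLt; omega) hcc
        have hv : ((e α) i : ℕ) = (α i : ℕ) + 1 := by
          rw [heval, hva, Nat.mod_eq_of_lt (by omega)]
        refine ⟨hlt, hv, ?_⟩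
        have hne : (e α) i ≠ 0 := by
          intro h; rw [h, Fin.val_zero] at hv; omega
        rw [hu']
        simp only [if_neg hne, e.symm_apply_apply]
    refine ⟨u', ?_, ?_⟩
    · intro β
      obtain ⟨α, rfl⟩ := e.surjective β
      rcases hcase α with ⟨hcc, h0, hu⟩ | ⟨hlt, hv, hu⟩
      · rw [hu]
        have hmem : u α * x i ∈ maximalIdeal S ^ ((k - ∑ j, (α j : ℕ)) / p + 1) := by
          rw [pow_succ]
          exact Ideal.mul_mem_mul (hub α) (hxi i)
        refine Ideal.pow_le_pow_right ?_ hmem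
        have hd1 : ∑ j, ((e α) j : ℕ) = ∑ j ∈ Finset.univ.erase i, (α j : ℕ) := by
          rw [heapp, hdeg]
          have : ((α i + 1 : Fin p) : ℕ) = 0 := by rw [← heval α]; rw [h0]; rfl
          rw [this, zero_add]
        have hd2 : ∑ j, (α j : ℕ) = (p - 1) + ∑ j ∈ Finset.univ.erase i, (α j : ℕ) := by
          rw [hdeg' α, hcc]
        rw [hd1, hd2, ← Nat.add_div_right _ hp0]
        apply Nat.div_le_div_right
        omega
      · rw [hu]
        have hd1 : ∑ j, ((e α) j : ℕ) = (∑ j, (α j : ℕ)) + 1 := by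
          rw [heapp, hdeg, ← heval α, hv, hdeg' α]
          omega
        have : k + 1 - ∑ j, ((e α) j : ℕ) = k - ∑ j, (α j : ℕ) := by
          rw [hd1]; omega
        rw [this]
        exact hub α
    · have hppow : x i ^ p = x i ^ (p - 1) * x i := by
        rw [← pow_succ]
        congr 1
        omega
      have hsum : ∑ β : ι → Fin p, u' β ^ p * ∏ j, x j ^ (β j : ℕ)
          = (∑ α : ι → Fin p, u α ^ p * ∏ j, x j ^ (α j : ℕ)) * x i := by
        rw [Finset.sum_mul]
        refine (Fintype.sum_equiv e
          (fun α => u α ^ p * (∏ j, x j ^ (α j : ℕ)) * x i)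
          (fun β => u' β ^ p * ∏ j, x j ^ (β j : ℕ)) ?_).symm
        intro α
        rcases hcase α with ⟨hcc, h0, hu⟩ | ⟨hlt, hv, hu⟩
        · rw [hu, heapp, hmono α (α i + 1), hmono' α, hcc]
          have h00 : ((α i + 1 : Fin p) : ℕ) = 0 := by rw [← heval α, h0]; rfl
          rw [h00, pow_zero, one_mul, mul_pow, hppow]
          ring
        · rw [hu, heapp, hmono α (α i + 1), hmono' α, ← heval α, hv]
          rw [pow_succ]
          ring
      rw [hsum, ← sub_mul, pow_succ]
      exact Ideal.mul_mem_mul hur (hxi i)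
end C

section C2
variable {C : Type u} [Field C] {S : Type u} [CommRing S] [Algebra C S]
  [IsLocalRing S] {p : ℕ} [Fact p.Prime] [CharP S p] [CharP C p] [PerfectRing C p]
  {ι : Type u} [Fintype ι] [DecidableEq ι]
  [IsNoetherianRing S] [IsAdicComplete (maximalIdeal S) S]

lemma repr_exists (hres : Function.Surjective (algebraMap C (ResidueField S)))
    (x : ι → S) (hx : Ideal.span (Set.range x) = maximalIdeal S) (s : S) :
    ∃ L : (ι → Fin p) → S, s = ∑ α : ι → Fin p, L α ^ p * ∏ i, x i ^ (α i : ℕ) := by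
  have hp2 : 2 ≤ p := (Fact.out : p.Prime).two_le
  have hp0 : 0 < p := by omega
  choose step hb hr using stepA (p := p) hres x hx
  set mono : (ι → Fin p) → S := fun α => ∏ i, x i ^ (α i : ℕ) with hmono
  let g : ∀ N : ℕ, {v : (ι → Fin p) → S //
      s - ∑ α : ι → Fin p, v α ^ p * mono α ∈ maximalIdeal S ^ N} :=
    Nat.rec
      ⟨0, by
        simp only [Pi.zero_apply, zero_pow (by omega : p ≠ 0), zero_mul, Finset.sum_const_zero,
          sub_zero, pow_zero, Ideal.one_eq_top]
        trivial⟩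
      (fun N prev =>
        ⟨prev.1 + step N _ prev.2, by
          have hsum : ∑ α : ι → Fin p, (prev.1 + step N _ prev.2) α ^ p * mono α
              = ∑ α : ι → Fin p, prev.1 α ^ p * mono α
                + ∑ α : ι → Fin p, (step N _ prev.2) α ^ p * mono α := by
            rw [← Finset.sum_add_distrib]
            refine Finset.sum_congr rfl fun α _ => ?_
            rw [Pi.add_apply, add_pow_char, add_mul]
          rw [hsum, ← sub_sub]
          exact hr N _ prev.2⟩)
  have hg1 : ∀ N, (g (N + 1)).1 = (g N).1 +
      step N (s - ∑ α : ι → Fin p, (g N).1 α ^ p * mono α) (g N).2 := fun N => rfl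
  have hdiff : ∀ (N : ℕ) (α : ι → Fin p), (g (N + 1)).1 α - (g N).1 α ∈
      maximalIdeal S ^ ((N - ∑ i, (α i : ℕ)) / p) := by
    intro N α
    rw [hg1, Pi.add_apply, add_sub_cancel_left]
    exact hb N _ (g N).2 α
  set cc := Fintype.card ι * (p - 1) with hcc
  have hdegle : ∀ α : ι → Fin p, ∑ i, (α i : ℕ) ≤ cc := by
    intro α
    calc ∑ i, (α i : ℕ) ≤ ∑ _i : ι, (p - 1) :=
          Finset.sum_le_sum fun i _ => by have := (α i).isLt; omega
      _ = cc := by rw [Finset.sum_const, smul_eq_mul, Finset.card_univ]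
  have hchain : ∀ (N M : ℕ) (α : ι → Fin p), (g (N + M)).1 α - (g N).1 α ∈
      maximalIdeal S ^ ((N - cc) / p) := by
    intro N M α
    induction M with
    | zero => rw [Nat.add_zero, sub_self]; exact zero_mem _
    | succ M ih =>
      have h1 : (g (N + M + 1)).1 α - (g (N + M)).1 α ∈ maximalIdeal S ^ ((N - cc) / p) := by
        refine Ideal.pow_le_pow_right ?_ (hdiff (N + M) α)
        refine Nat.div_le_div_right ?_
        have := hdegle α
        omega
      have := add_mem h1 ih
      rw [sub_add_sub_cancel] at this
      rwa [show N + (M + 1) = N + M + 1 by omega]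
  have hcau : ∀ α : ι → Fin p, ∃ L : S, ∀ n : ℕ,
      (g (cc + p * n)).1 α ≡ L [SMOD (maximalIdeal S ^ n • ⊤ : Submodule S S)] := by
    intro α
    refine IsPrecomplete.prec (IsAdicComplete.toIsPrecomplete) ?_
    intro m n hmn
    rw [SModEq.sub_mem, smul_eq_mul, Ideal.mul_top]
    have h1 : (g (cc + p * m + (p * n - p * m))).1 α - (g (cc + p * m)).1 α ∈
        maximalIdeal S ^ ((cc + p * m - cc) / p) := hchain _ _ α
    have hle : p * m ≤ p * n := Nat.mul_le_mul_left p hmn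
    rw [show cc + p * m + (p * n - p * m) = cc + p * n by omega,
      show cc + p * m - cc = p * m by omega, Nat.mul_div_cancel_left m hp0] at h1
    have := neg_mem h1
    rwa [neg_sub] at this
  choose L hL using hcau
  refine ⟨L, ?_⟩
  have key : ∀ j : ℕ, s - ∑ α : ι → Fin p, L α ^ p * mono α ∈ maximalIdeal S ^ j := by
    intro j
    have h1 : s - ∑ α : ι → Fin p, (g (cc + p * j)).1 α ^ p * mono α ∈
        maximalIdeal S ^ (cc + p * j) := (g _).2
    have h2 : ∀ α : ι → Fin p, (g (cc + p * j)).1 α - L α ∈ maximalIdeal S ^ j := by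
      intro α
      have := (hL α j).symm
      rw [SModEq.sub_mem, smul_eq_mul, Ideal.mul_top] at this
      have := neg_mem this
      rwa [neg_sub] at this
    have hs2 : ∑ α : ι → Fin p, ((g (cc + p * j)).1 α - L α) ^ p * mono α
        = ∑ α : ι → Fin p, (g (cc + p * j)).1 α ^ p * mono α
          - ∑ α : ι → Fin p, L α ^ p * mono α := by
      rw [← Finset.sum_sub_distrib]
      refine Finset.sum_congr rfl fun α _ => ?_
      rw [sub_pow_char, sub_mul]
    have keyeq : s - ∑ α : ι → Fin p, L α ^ p * mono α
        = (s - ∑ α : ι → Fin p, (g (cc + p * j)).1 α ^ p * mono α)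
          + ∑ α : ι → Fin p, ((g (cc + p * j)).1 α - L α) ^ p * mono α := by
      rw [hs2]; ring
    rw [keyeq]
    refine add_mem (Ideal.pow_le_pow_right ?_ h1) (Submodule.sum_mem _ fun α _ => ?_)
    · have : j ≤ p * j := Nat.le_mul_of_pos_left j hp0
      omega
    · refine Ideal.mul_mem_right _ _ ?_
      have hz := h2 α
      have hpow : ((g (cc + p * j)).1 α - L α) ^ p
          = ((g (cc + p * j)).1 α - L α) ^ (p - 1) * ((g (cc + p * j)).1 α - L α) := by
        rw [← pow_succ]; congr 1; omega
      rw [hpow]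
      exact Ideal.mul_mem_left _ _ hz
  have hzero : s - ∑ α : ι → Fin p, L α ^ p * mono α = 0 := by
    refine IsHausdorff.haus (IsAdicComplete.toIsHausdorff (I := maximalIdeal S) (M := S)) _ ?_
    intro n
    rw [SModEq.zero, smul_eq_mul, Ideal.mul_top]
    exact key n
  exact (sub_eq_zero.mp hzero)

include p in
lemma kaehler_finite (hres : Function.Surjective (algebraMap C (ResidueField S))) :
    Module.Finite S (Ω[S⁄C]) := by
  classical
  obtain ⟨tset, htset⟩ := IsNoetherian.noetherian (maximalIdeal S)
  let ι' : Type u := {y : S // y ∈ tset}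
  let x : ι' → S := fun i => (i : S)
  have hx : Ideal.span (Set.range x) = maximalIdeal S := by
    rw [show Set.range x = ↑tset from Subtype.range_coe_subtype, ← htset]
  set N := Submodule.span S (Set.range fun i : ι' => KaehlerDifferential.D C S (x i)) with hN
  have hD : ∀ s : S, KaehlerDifferential.D C S s ∈ N := by
    intro s
    obtain ⟨L, hL⟩ := repr_exists (p := p) hres x hx s
    rw [hL, map_sum]
    refine Submodule.sum_mem _ fun α _ => ?_
    rw [Derivation.leibniz]
    have hDp : KaehlerDifferential.D C S (L α ^ p) = 0 := by
      rw [Derivation.leibniz_pow, ← Nat.cast_smul_eq_nsmul S, CharP.cast_eq_zero S p, zero_smul]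
    rw [hDp, smul_zero, add_zero]
    refine Submodule.smul_mem _ _ ?_
    -- D of the monomial lies in N
    have hmon : ∀ z ∈ Submonoid.closure (Set.range x), KaehlerDifferential.D C S z ∈ N := by
      intro z hz
      induction hz using Submonoid.closure_induction with
      | mem w hw =>
        obtain ⟨i, rfl⟩ := hw
        exact Submodule.subset_span (Set.mem_range_self i)
      | one => rw [Derivation.map_one_eq_zero]; exact zero_mem _
      | mul a b ha hb iha ihb =>
        rw [Derivation.leibniz]
        exact add_mem (Submodule.smul_mem _ _ ihb) (Submodule.smul_mem _ _ iha)
    refine hmon _ (Submonoid.prod_mem _ fun i _ => pow_mem (Submonoid.subset_closure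
      (Set.mem_range_self i)) _)
  have hNtop : N = ⊤ := by
    refine le_antisymm le_top ?_
    rw [← KaehlerDifferential.span_range_derivation C S]
    refine Submodule.span_le.mpr ?_
    rintro _ ⟨s, rfl⟩
    exact hD s
  refine ⟨?_⟩
  rw [← hNtop, hN]
  exact Submodule.fg_span (Set.finite_range _)

end C2
section D
variable {C : Type u} [Field C] {S : Type u} [CommRing S] [Algebra C S] [IsLocalRing S]

lemma D_mem_smul {p : ℕ} [Fact p.Prime] [CharP S p] {m : ℕ} (hm : 1 ≤ m) {z : S}
    (hz : z ∈ Ideal.span ((fun s : S => s ^ p ^ m) '' (maximalIdeal S : Set S))) :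
    KaehlerDifferential.D C S z ∈
      Ideal.span ((fun s : S => s ^ p ^ m) '' (maximalIdeal S : Set S)) •
        (⊤ : Submodule S (Ω[S⁄C])) := by
  induction hz using Submodule.span_induction with
  | mem w hw =>
    obtain ⟨s, hs, rfl⟩ := hw
    have hD0 : KaehlerDifferential.D C S (s ^ p ^ m) = 0 := by
      rw [Derivation.leibniz_pow, ← Nat.cast_smul_eq_nsmul S, Nat.cast_pow,
        CharP.cast_eq_zero S p, zero_pow (by omega : m ≠ 0), zero_smul]
    rw [hD0]
    exact zero_mem _
  | zero => rw [map_zero]; exact zero_mem _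
  | add a b ha hb iha ihb => rw [map_add]; exact add_mem iha ihb
  | smul t a ha iha =>
    rw [smul_eq_mul, Derivation.leibniz]
    exact add_mem (Submodule.smul_mem _ _ iha) (Submodule.smul_mem_smul ha Submodule.mem_top)

end D

/-- Let `(f_m : T → R)` be an `A`-compatible sequence with limit
`F = G : T̂ → R̂`.  Then for every `k`, the induced map `F_*` on differentials agrees with
`(f_k)_*` on the invariant differential forms of `A`.  Here `A` is a commutative algebraic
group over a perfect field `C` of characteristic `p > 0`; the complete Hopf algebra `H` is
the completion of `T = O_{A,0}` (with its group structure `add`/`neg` on points into complete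
local Noetherian `C`-algebras, identity the counit `ε`), `S` is the completion of `R`, and an
invariant form is an element `ω` of the differentials of `H` whose pullback is additive for
sums of points of `A` (the characterizing property of invariant forms). -/
theorem stmt16
    (C : Type u) [Field C] (p : ℕ) [Fact p.Prime] [CharP C p] [PerfectRing C p]
    (H : Type u) [CommRing H] [Algebra C H] [IsLocalRing H] [IsNoetherianRing H]
    [IsAdicComplete (maximalIdeal H) H]
    (hresH : Function.Bijective (algebraMap C (ResidueField H)))
    (S : Type u) [CommRing S] [Algebra C S] [IsLocalRing S] [IsNoetherianRing S]
    [IsAdicComplete (maximalIdeal S) S] [ExpChar S p]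
    (hresS : Function.Bijective (algebraMap C (ResidueField S)))
    -- the counit of `H` (the residue map)
    (ε : H →ₐ[C] C) (hε : ∀ h ∈ maximalIdeal H, ε h = 0)
    -- the group structure on points of the complete Hopf algebra `H`
    (add : ∀ (T : Type u) [CommRing T] [IsLocalRing T] [Algebra C T] [IsNoetherianRing T]
      [IsAdicComplete (maximalIdeal T) T],
      (H →ₐ[C] T) → (H →ₐ[C] T) → (H →ₐ[C] T))
    (neg : ∀ (T : Type u) [CommRing T] [IsLocalRing T] [Algebra C T] [IsNoetherianRing T]
      [IsAdicComplete (maximalIdeal T) T],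
      (H →ₐ[C] T) → (H →ₐ[C] T))
    (hcomm : ∀ (T : Type u) [CommRing T] [IsLocalRing T] [Algebra C T] [IsNoetherianRing T]
      [IsAdicComplete (maximalIdeal T) T] (F G : H →ₐ[C] T), add T F G = add T G F)
    (hassoc : ∀ (T : Type u) [CommRing T] [IsLocalRing T] [Algebra C T] [IsNoetherianRing T]
      [IsAdicComplete (maximalIdeal T) T] (F G K : H →ₐ[C] T),
      add T (add T F G) K = add T F (add T G K))
    (hzero : ∀ (T : Type u) [CommRing T] [IsLocalRing T] [Algebra C T] [IsNoetherianRing T]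
      [IsAdicComplete (maximalIdeal T) T] (F : H →ₐ[C] T),
      add T F ((Algebra.ofId C T).comp ε) = F)
    (hneg : ∀ (T : Type u) [CommRing T] [IsLocalRing T] [Algebra C T] [IsNoetherianRing T]
      [IsAdicComplete (maximalIdeal T) T] (F : H →ₐ[C] T),
      add T F (neg T F) = (Algebra.ofId C T).comp ε)
    (hnat : ∀ (T T' : Type u) [CommRing T] [IsLocalRing T] [Algebra C T] [IsNoetherianRing T]
      [IsAdicComplete (maximalIdeal T) T] [CommRing T'] [IsLocalRing T'] [Algebra C T']
      [IsNoetherianRing T'] [IsAdicComplete (maximalIdeal T') T']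
      (φ : T →ₐ[C] T') (F G : H →ₐ[C] T),
      φ.comp (add T F G) = add T' (φ.comp F) (φ.comp G))
    (hnegnat : ∀ (T T' : Type u) [CommRing T] [IsLocalRing T] [Algebra C T]
      [IsNoetherianRing T] [IsAdicComplete (maximalIdeal T) T] [CommRing T'] [IsLocalRing T']
      [Algebra C T'] [IsNoetherianRing T'] [IsAdicComplete (maximalIdeal T') T']
      (φ : T →ₐ[C] T') (F : H →ₐ[C] T), φ.comp (neg T F) = neg T' (φ.comp F))
    -- the `A`-compatible sequence
    (F : ℕ → (H →ₐ[C] S))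
    (hFloc : ∀ (m : ℕ), ∀ h ∈ maximalIdeal H, F m h ∈ maximalIdeal S)
    (hcompat : ∀ (m : ℕ) (h : H), ∃ s : S,
      (add S (F (m + 1)) (neg S (F m))) h = s ^ p ^ (m + 1))
    -- the limit `G` of the sequence
    (G : H →ₐ[C] S)
    (hlim : ∀ (m : ℕ) (h : H), G h - F m h ∈
      Ideal.span ((fun s : S => s ^ p ^ m) '' (maximalIdeal S : Set S)))
    -- `ω` is an invariant differential form of `A`
    (ω : Ω[H⁄C])
    (hω : ∀ (T : Type u) [CommRing T] [IsLocalRing T] [Algebra C T] [IsNoetherianRing T]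
      [IsAdicComplete (maximalIdeal T) T] (G₁ G₂ : H →ₐ[C] T)
      (φ₁ φ₂ φ₃ : Ω[H⁄C] →+ Ω[T⁄C]),
      IsPushforward C G₁ φ₁ → IsPushforward C G₂ φ₂ → IsPushforward C (add T G₁ G₂) φ₃ →
        φ₃ ω = φ₁ ω + φ₂ ω) :
    -- the limit and each term of the sequence act in the same way on `ω`
    ∀ (k : ℕ) (φG φk : Ω[H⁄C] →+ Ω[S⁄C]),
      IsPushforward C G φG → IsPushforward C (F k) φk → φG ω = φk ω := by
  haveI : CharP S p := by
    rcases ‹ExpChar S p› with _ | h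
    · exact absurd (Fact.out : (1 : ℕ).Prime) (by norm_num)
    · assumption
  intro k φG φk hφG hφk
  choose Φ hΦ using fun m => exists_isPushforward (F m)
  have hstep : ∀ m, Φ (m + 1) ω = Φ m ω := by
    intro m
    obtain ⟨ψ, hψ⟩ := exists_isPushforward (add S (F (m + 1)) (neg S (F m)))
    have key : add S (F m) (add S (F (m + 1)) (neg S (F m))) = F (m + 1) := by
      rw [hcomm S (F m), hassoc S, hcomm S (neg S (F m)) (F m), hneg S (F m), hzero S (F (m + 1))]
    have h3 : IsPushforward C (add S (F m) (add S (F (m + 1)) (neg S (F m)))) (Φ (m + 1)) := by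
      rw [key]; exact hΦ (m + 1)
    have h4 := hω S (F m) (add S (F (m + 1)) (neg S (F m))) (Φ m) ψ (Φ (m + 1)) (hΦ m) hψ h3
    rw [h4, IsPushforward.eq_zero hψ (m + 1) (by omega) (hcompat m) ω, add_zero]
  have hconst : ∀ m, Φ m ω = Φ 0 ω := by
    intro m
    induction m with
    | zero => rfl
    | succ m ih => rw [hstep, ih]
  have hφkΦ : φk = Φ k := IsPushforward.ext hφk (hΦ k)
  have hmem : ∀ m : ℕ, 1 ≤ m → φG ω - Φ m ω ∈
      Ideal.span ((fun s : S => s ^ p ^ m) '' (maximalIdeal S : Set S)) •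
        (⊤ : Submodule S (Ω[S⁄C])) := by
    intro m hm
    have key : ∀ ξ ∈ Submodule.span H (Set.range (KaehlerDifferential.D C H)),
        ∀ a : H, φG (a • ξ) - Φ m (a • ξ) ∈
          Ideal.span ((fun s : S => s ^ p ^ m) '' (maximalIdeal S : Set S)) •
            (⊤ : Submodule S (Ω[S⁄C])) := by
      intro ξ hξ
      induction hξ using Submodule.span_induction with
      | mem w hw =>
        obtain ⟨h0, rfl⟩ := hw
        intro a
        rw [hφG, hΦ]
        have split : G a • KaehlerDifferential.D C S (G h0)
              - F m a • KaehlerDifferential.D C S (F m h0)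
            = (G a - F m a) • KaehlerDifferential.D C S (G h0)
              + F m a • (KaehlerDifferential.D C S (G h0)
                - KaehlerDifferential.D C S (F m h0)) := by
          rw [sub_smul, smul_sub]
          abel
        rw [split]
        refine add_mem (Submodule.smul_mem_smul (hlim m a) Submodule.mem_top)
          (Submodule.smul_mem _ _ ?_)
        rw [← map_sub]
        exact D_mem_smul hm (hlim m h0)
      | zero =>
        intro a
        rw [smul_zero, map_zero, map_zero, sub_zero]
        exact zero_mem _
      | add y z hy hz ihy ihz =>
        intro a
        rw [smul_add, map_add, map_add, add_sub_add_comm]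
        exact add_mem (ihy a) (ihz a)
      | smul b y hy ihy =>
        intro a
        rw [smul_smul]
        exact ihy _
    have := key ω (by rw [KaehlerDifferential.span_range_derivation]; trivial) 1
    simpa using this
  haveI : Module.Finite S (Ω[S⁄C]) := kaehler_finite (p := p) hresS.2
  have hy : ∀ N : ℕ, φG ω - Φ 0 ω ∈ (maximalIdeal S ^ N • ⊤ : Submodule S (Ω[S⁄C])) := by
    intro N
    have h1 := hmem (N + 1) (by omega)
    rw [hconst (N + 1)] at h1
    have hJle : Ideal.span ((fun s : S => s ^ p ^ (N + 1)) '' (maximalIdeal S : Set S))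
        ≤ maximalIdeal S ^ N := by
      rw [Ideal.span_le]
      rintro _ ⟨s, hs, rfl⟩
      dsimp only
      have hp2 : 2 ≤ p := (Fact.out : p.Prime).two_le
      have hNlt : N < p ^ (N + 1) :=
        lt_of_lt_of_le (Nat.lt_succ_self N) (Nat.one_add_le_iff.mp (by
          have := Nat.lt_pow_self (n := N + 1) (by omega : 1 < p)
          omega))
      have hsplit : s ^ p ^ (N + 1) = s ^ N * s ^ (p ^ (N + 1) - N) := by
        rw [← pow_add]
        congr 1
        omega
      rw [hsplit]
      exact Ideal.mul_mem_right _ _ (Ideal.pow_mem_pow hs N)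
    exact Submodule.smul_mono_left hJle h1
  have hzero : φG ω - Φ 0 ω = 0 := by
    have hbot := Ideal.iInf_pow_smul_eq_bot_of_isLocalRing (R := S) (M := Ω[S⁄C])
      (I := maximalIdeal S) (Ideal.IsMaximal.ne_top (maximalIdeal.isMaximal S))
    rw [← Submodule.mem_bot (R := S), ← hbot, Submodule.mem_iInf]
    exact hy
  rw [hφkΦ, hconst k]
  exact sub_eq_zero.mp hzero
end
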